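/- arXiv:1903.09805 — 8 statements merged into one kernel-verified Lean document; each statement's English description precedes it below -/
import Mathlib

section
/- With probability 1, limsup_{n→∞} S_n/√n = +∞ for the simple symmetric random walk (S_n). -/
open MeasureTheory ProbabilityTheory Filter Real

private lemma sqrt_nat_tendsto : Tendsto (fun n : ℕ => Real.sqrt n) atTop atTop := by
  apply tendsto_atTop_atTop.2
  intro b
  refine ⟨⌈b⌉₊ ^ 2, fun a ha => ?_⟩
  have h1 : (⌈b⌉₊ : ℝ) ^ 2 ≤ (a : ℝ) := by exact_mod_cast ha
  have := Real.sqrt_le_sqrt h1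
  rw [Real.sqrt_sq (by positivity)] at this
  exact le_trans (Nat.le_ceil b) this

/-- Stirling-based lower bound for the central binomial coefficient. -/
private lemma centralBinom_lb :
    ∀ᶠ n : ℕ in atTop, (1 : ℝ) / 2 ≤ Real.sqrt n * n.centralBinom / 4 ^ n := by
  have h2n : Tendsto (fun n : ℕ => 2 * n) atTop atTop :=
    tendsto_atTop_atTop.2 fun b => ⟨b, fun a ha => by omega⟩
  have hst := Stirling.tendsto_stirlingSeq_sqrt_pi
  have hlim : Tendsto (fun n : ℕ => Stirling.stirlingSeq (2 * n) / Stirling.stirlingSeq n ^ 2)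
      atTop (nhds (Real.sqrt π / Real.sqrt π ^ 2)) := by
    exact (hst.comp h2n).div (hst.pow 2) (by positivity)
  have hgt : (1 : ℝ) / 2 < Real.sqrt π / Real.sqrt π ^ 2 := by
    have hπ : (0:ℝ) < π := Real.pi_pos
    have h4 : π < 4 := by nlinarith [Real.pi_lt_d2]
    have : Real.sqrt π / Real.sqrt π ^ 2 = 1 / Real.sqrt π := by
      rw [pow_two]
      rw [div_mul_eq_div_div, div_self (by positivity)]
    rw [this]
    have h2 : Real.sqrt π < 2 := by
      have := Real.sqrt_lt_sqrt (le_of_lt hπ) h4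
      simpa [show Real.sqrt 4 = 2 by
        rw [show (4:ℝ) = 2^2 by norm_num, Real.sqrt_sq (by norm_num)]] using this
    rw [div_lt_div_iff₀ (by norm_num) (Real.sqrt_pos.2 hπ)]
    linarith
  have hev := hlim.eventually_const_le hgt
  filter_upwards [hev, eventually_ge_atTop 1] with n hn hn1
  have heq : Real.sqrt n * n.centralBinom / 4 ^ n
      = Stirling.stirlingSeq (2 * n) / Stirling.stirlingSeq n ^ 2 := by
    have hn0 : (0:ℝ) < n := by exact_mod_cast hn1
    have hfac : (0:ℝ) < (n.factorial : ℝ) := by exact_mod_cast n.factorial_pos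
    have hsq : (0:ℝ) < Real.sqrt (2 * n) := Real.sqrt_pos.2 (by positivity)
    have hpow : (0:ℝ) < ((n : ℝ) / exp 1) ^ n := by positivity
    have hcb : (n.centralBinom : ℝ) = (((2 * n).factorial) : ℝ) / ((n.factorial : ℝ) * (n.factorial : ℝ)) := by
      rw [Nat.centralBinom_eq_two_mul_choose, Nat.cast_choose ℝ (by omega),
        show 2 * n - n = n from by omega]
    unfold Stirling.stirlingSeq
    rw [hcb]
    push_cast
    have hsq4 : Real.sqrt (2 * (2 * (n:ℝ))) = 2 * Real.sqrt n := by
      rw [show (2 * (2 * (n:ℝ))) = 4 * n by ring, show (4:ℝ) = 2^2 by norm_num,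
        Real.sqrt_mul (by positivity), Real.sqrt_sq (by norm_num)]
    have hpow4 : ((2 * (n:ℝ)) / exp 1) ^ (2 * n) = 4 ^ n * (((n:ℝ) / exp 1) ^ n) ^ 2 := by
      rw [show (2 * (n:ℝ)) / exp 1 = 2 * ((n:ℝ) / exp 1) by ring, mul_pow,
        pow_mul, ← pow_mul _ n 2]
      norm_num
      ring
    rw [hsq4, hpow4]
    field_simp
    ring_nf
    rw [Real.sq_sqrt (by positivity : (0:ℝ) ≤ n * 2), Real.sq_sqrt (Nat.cast_nonneg n : (0:ℝ) ≤ n)]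
  rw [heq]
  exact hn

private lemma choose_mono_half (n : ℕ) : ∀ s, s ≤ n → ∀ r, r ≤ s → (2*n).choose r ≤ (2*n).choose s := by
  intro s
  induction s with
  | zero => intro _ r hr; simp [Nat.le_zero.mp hr]
  | succ s ih =>
    intro hs r hr
    rcases Nat.eq_or_lt_of_le hr with h | h
    · subst h; exact le_rfl
    · have h1 : r ≤ s := by omega
      refine le_trans (ih (by omega) r h1) ?_
      apply Nat.choose_le_succ_of_lt_half_left
      omega

private lemma choose_anti (n a b : ℕ) (hab : a ≤ b) (hb : b ≤ n) :
    (2*n).choose (n + b) ≤ (2*n).choose (n + a) := by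
  have h1 : (2*n).choose (n + b) = (2*n).choose (n - b) := by
    rw [← Nat.choose_symm (show n + b ≤ 2*n by omega), show 2*n - (n+b) = n - b by omega]
  have h2 : (2*n).choose (n + a) = (2*n).choose (n - a) := by
    rw [← Nat.choose_symm (show n + a ≤ 2*n by omega), show 2*n - (n+a) = n - a by omega]
  rw [h1, h2]
  exact choose_mono_half n (n - a) (by omega) (n - b) (by omega)

private lemma choose_ratio (n : ℕ) : ∀ K, K ≤ n →
    (((n:ℝ) - K) / ((n:ℝ) + K)) ^ K * n.centralBinom ≤ ((2*n).choose (n + K)) := by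
  intro K
  induction K with
  | zero =>
    intro _
    simp [Nat.centralBinom_eq_two_mul_choose]
  | succ K ih =>
    intro hK
    have hK' : K ≤ n := by omega
    have ihK := ih hK'
    have hrec : ((2*n).choose (n + K + 1) : ℝ)
        = ((2*n).choose (n + K) : ℝ) * ((n:ℝ) - K) / ((n:ℝ) + K + 1) := by
      have := Nat.choose_succ_right_eq (2*n) (n + K)
      have hcast : ((2*n).choose (n + K + 1) : ℝ) * ((n:ℝ) + K + 1)
          = ((2*n).choose (n + K) : ℝ) * ((n:ℝ) - K) := by
        have h2 : 2*n - (n + K) = n - K := by omega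
        calc ((2*n).choose (n + K + 1) : ℝ) * ((n:ℝ) + K + 1)
            = (((2*n).choose (n + K + 1) * (n + K + 1) : ℕ) : ℝ) := by push_cast; ring
          _ = (((2*n).choose (n + K) * (n - K) : ℕ) : ℝ) := by rw [← h2, this]
          _ = ((2*n).choose (n + K) : ℝ) * ((n:ℝ) - K) := by
              push_cast [Nat.cast_sub hK']; ring
      field_simp
      linarith [hcast]
    rw [show n + (K + 1) = n + K + 1 from rfl, hrec]
    have hn0 : (0:ℝ) < n := by
      have : (1:ℕ) ≤ n := by omega
      exact_mod_cast Nat.lt_of_lt_of_le Nat.zero_lt_one this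
    have hK1 : ((K:ℝ) + 1) ≤ n := by exact_mod_cast hK
    have hx'0 : (0:ℝ) ≤ ((n:ℝ) - (K+1)) / ((n:ℝ) + (K+1)) := by
      apply div_nonneg <;> [linarith; positivity]
    have hxx : ((n:ℝ) - (K+1)) / ((n:ℝ) + (K+1)) ≤ ((n:ℝ) - K) / ((n:ℝ) + K) := by
      rw [div_le_div_iff₀ (by positivity) (by positivity)]
      nlinarith
    have hx2 : ((n:ℝ) - (K+1)) / ((n:ℝ) + (K+1)) ≤ ((n:ℝ) - K) / ((n:ℝ) + K + 1) := by
      rw [div_le_div_iff₀ (by positivity) (by positivity)]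
      nlinarith
    have hcb0 : (0:ℝ) ≤ n.centralBinom := Nat.cast_nonneg _
    have hc0 : (0:ℝ) ≤ ((2*n).choose (n + K) : ℝ) := Nat.cast_nonneg _
    have hpow : (((n:ℝ) - (K+1)) / ((n:ℝ) + (K+1)))^K ≤ (((n:ℝ) - K) / ((n:ℝ) + K))^K :=
      pow_le_pow_left₀ hx'0 hxx K
    have hx0K : (0:ℝ) ≤ (((n:ℝ) - (K+1)) / ((n:ℝ) + (K+1)))^K := pow_nonneg hx'0 K
    calc (((n:ℝ) - ↑(K+1)) / ((n:ℝ) + ↑(K+1))) ^ (K+1) * n.centralBinom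
        = ((((n:ℝ) - (K+1)) / ((n:ℝ) + (K+1)))^K * n.centralBinom)
            * (((n:ℝ) - (K+1)) / ((n:ℝ) + (K+1))) := by push_cast; ring
      _ ≤ ((((n:ℝ) - K) / ((n:ℝ) + K))^K * n.centralBinom)
            * (((n:ℝ) - (K+1)) / ((n:ℝ) + (K+1))) := by
            apply mul_le_mul_of_nonneg_right _ hx'0
            exact mul_le_mul_of_nonneg_right hpow hcb0
      _ ≤ ((2*n).choose (n + K) : ℝ) * (((n:ℝ) - (K+1)) / ((n:ℝ) + (K+1))) :=
            mul_le_mul_of_nonneg_right ihK hx'0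
      _ ≤ ((2*n).choose (n + K) : ℝ) * (((n:ℝ) - K) / ((n:ℝ) + K + 1)) :=
            mul_le_mul_of_nonneg_left hx2 hc0
      _ = ((2*n).choose (n + K) : ℝ) * ((n:ℝ) - K) / ((n:ℝ) + K + 1) := by ring

private lemma ratio_exp_lb (n k : ℕ) (hn : 0 < n) (hk : 2*k ≤ n) :
    Real.exp (-(4 * (k:ℝ)^2 / n)) ≤ (((n:ℝ) - k) / ((n:ℝ) + k)) ^ k := by
  have hn0 : (0:ℝ) < n := by exact_mod_cast hn
  have hk' : 2 * (k:ℝ) ≤ n := by exact_mod_cast hk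
  have hk0 : (0:ℝ) ≤ k := Nat.cast_nonneg k
  set r : ℝ := ((n:ℝ) - k) / ((n:ℝ) + k) with hr
  have hr0 : 0 < r := by
    apply div_pos <;> linarith
  -- log r ≥ -(2k/(n-k)) ≥ -(4k/n)
  have hlog : -(4 * (k:ℝ) / n) ≤ Real.log r := by
    have hinv : Real.log r⁻¹ ≤ r⁻¹ - 1 := Real.log_le_sub_one_of_pos (by positivity)
    rw [Real.log_inv] at hinv
    have hrinv : r⁻¹ - 1 = 2 * (k:ℝ) / ((n:ℝ) - k) := by
      rw [hr, inv_div, div_sub_one (by intro h; nlinarith [hk', hn0] : (n:ℝ) - k ≠ 0)]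
      congr 1
      ring
    have h2 : 2 * (k:ℝ) / ((n:ℝ) - k) ≤ 4 * (k:ℝ) / n := by
      rw [div_le_div_iff₀ (by linarith) (by linarith)]
      nlinarith
    rw [hrinv] at hinv
    linarith
  calc Real.exp (-(4 * (k:ℝ)^2 / n)) = Real.exp (-(4 * (k:ℝ)/n)) ^ k := by
        rw [← Real.exp_nat_mul]
        congr 1
        push_cast
        ring
    _ ≤ Real.exp (Real.log r) ^ k := by
        apply pow_le_pow_left₀ (by positivity)
        exact Real.exp_le_exp.2 hlog
    _ = r ^ k := by rw [Real.exp_log hr0]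

section Walk

open MeasureTheory ProbabilityTheory

variable {Ω : Type*} [MeasurableSpace Ω] {μ : Measure Ω} [IsProbabilityMeasure μ]
  {B : ℕ → Ω → ℝ}

private lemma cyl_measure' (hBindep : iIndepFun B μ)
    (hB1 : ∀ i, μ {ω | B i ω = 1} = 1 / 2)
    (hB0 : ∀ i, μ {ω | B i ω = 0} = 1 / 2)
    (t : Finset ℕ) (v : ℕ → ℝ) (hv : ∀ j, v j = 0 ∨ v j = 1) :
    μ (⋂ j ∈ t, {ω | B j ω = v j}) = 2⁻¹ ^ t.card := by
  have hrw : (⋂ j ∈ t, {ω | B j ω = v j}) = ⋂ j ∈ t, B j ⁻¹' {v j} := rfl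
  rw [hrw, hBindep.meas_biInter (fun j _ => ⟨{v j}, measurableSet_singleton _, rfl⟩)]
  rw [Finset.prod_congr rfl (fun j _ => show μ (B j ⁻¹' {v j}) = 2⁻¹ from ?_),
    Finset.prod_const]
  rcases hv j with h | h
  · rw [h]
    rw [show B j ⁻¹' {(0:ℝ)} = {ω | B j ω = 0} from rfl, hB0 j]
    norm_num
  · rw [h]
    rw [show B j ⁻¹' {(1:ℝ)} = {ω | B j ω = 1} from rfl, hB1 j]
    norm_num

private lemma cyl_measure (hBindep : iIndepFun B μ)
    (hB1 : ∀ i, μ {ω | B i ω = 1} = 1 / 2)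
    (hB0 : ∀ i, μ {ω | B i ω = 0} = 1 / 2)
    (m : ℕ) (s : Finset ℕ) :
    μ (⋂ i ∈ Finset.range m, {ω | B (i+1) ω = (if i ∈ s then (1:ℝ) else 0)}) = 2⁻¹ ^ m := by
  have hv : ∀ j : ℕ, (if j - 1 ∈ s then (1:ℝ) else 0) = 0 ∨ (if j - 1 ∈ s then (1:ℝ) else 0) = 1 := by
    intro j; split <;> simp
  have h := cyl_measure' hBindep hB1 hB0 ((Finset.range m).image (·+1))
    (fun j => if j - 1 ∈ s then (1:ℝ) else 0) hv
  rw [Finset.card_image_of_injective _ (fun a b h => by omega), Finset.card_range] at h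
  rw [← h]
  congr 1
  ext ω
  simp only [Set.mem_iInter, Finset.mem_image, Finset.mem_range, Set.mem_setOf_eq]
  constructor
  · rintro hall j ⟨i, hi, rfl⟩
    simpa using hall i hi
  · intro hall i hi
    simpa using hall (i+1) ⟨i, hi, rfl⟩

private lemma count_measure (hBmeas : ∀ i, Measurable (B i))
    (hBindep : iIndepFun B μ)
    (hB01 : ∀ i ω, B i ω = 0 ∨ B i ω = 1)
    (hB1 : ∀ i, μ {ω | B i ω = 1} = 1 / 2)
    (hB0 : ∀ i, μ {ω | B i ω = 0} = 1 / 2)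
    (m t : ℕ) :
    μ {ω | ((Finset.range m).filter (fun i => B (i+1) ω = 1)).card = t}
      = (m.choose t) * 2⁻¹ ^ m := by
  classical
  set Cyl : Finset ℕ → Set Ω :=
    fun s => ⋂ i ∈ Finset.range m, {ω | B (i+1) ω = (if i ∈ s then (1:ℝ) else 0)} with hCyl
  have hkey : ∀ s : Finset ℕ, s ⊆ Finset.range m → ∀ ω, ω ∈ Cyl s →
      (Finset.range m).filter (fun i => B (i+1) ω = 1) = s := by
    intro s hsub ω hω
    simp only [hCyl, Set.mem_iInter, Set.mem_setOf_eq] at hω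
    ext i
    simp only [Finset.mem_filter, Finset.mem_range]
    constructor
    · rintro ⟨hi, hB⟩
      have := hω i (Finset.mem_range.2 hi)
      by_contra hns
      rw [if_neg hns] at this
      rw [this] at hB
      norm_num at hB
    · intro his
      have hi := Finset.mem_range.1 (hsub his)
      refine ⟨hi, ?_⟩
      have := hω i (Finset.mem_range.2 hi)
      rwa [if_pos his] at this
  have hset : {ω | ((Finset.range m).filter (fun i => B (i+1) ω = 1)).card = t}
      = ⋃ s ∈ Finset.powersetCard t (Finset.range m), Cyl s := by
    ext ω
    simp only [Set.mem_setOf_eq, Set.mem_iUnion, Finset.mem_powersetCard, exists_prop]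
    constructor
    · intro h
      refine ⟨(Finset.range m).filter (fun i => B (i+1) ω = 1),
        ⟨Finset.filter_subset _ _, h⟩, ?_⟩
      simp only [hCyl, Set.mem_iInter, Set.mem_setOf_eq]
      intro i hi
      by_cases hB : B (i+1) ω = 1
      · simp [Finset.mem_filter, hi, hB]
      · have h0 : B (i+1) ω = 0 := (hB01 (i+1) ω).resolve_right hB
        simp [Finset.mem_filter, hB, h0]
    · rintro ⟨s, ⟨hsub, hcard⟩, hω⟩
      rw [hkey s hsub ω hω, hcard]
  have hmeascyl : ∀ s : Finset ℕ, MeasurableSet (Cyl s) := by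
    intro s
    apply Finset.measurableSet_biInter
    intro i _
    exact hBmeas (i+1) (measurableSet_singleton _)
  have hdisj : (↑(Finset.powersetCard t (Finset.range m)) :
      Set (Finset ℕ)).PairwiseDisjoint Cyl := by
    intro s hs s' hs' hne
    rw [Finset.mem_coe, Finset.mem_powersetCard] at hs hs'
    rw [Function.onFun, Set.disjoint_left]
    intro ω hω hω'
    exact hne ((hkey s hs.1 ω hω) ▸ (hkey s' hs'.1 ω hω'))
  rw [hset, measure_biUnion_finset hdisj (fun s _ => hmeascyl s)]
  rw [Finset.sum_congr rfl (fun s _ => cyl_measure hBindep hB1 hB0 m s),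
    Finset.sum_const, Finset.card_powersetCard, Finset.card_range, nsmul_eq_mul]

end Walk

section Walk2

open MeasureTheory ProbabilityTheory

variable {Ω : Type*} [MeasurableSpace Ω] {μ : Measure Ω} [IsProbabilityMeasure μ]
  {B : ℕ → Ω → ℝ}

private lemma S_val (hB01 : ∀ i ω, B i ω = 0 ∨ B i ω = 1)
    {S : ℕ → Ω → ℝ} (hS : ∀ k ω, S k ω = ∑ i ∈ Finset.range k, (2 * B (i + 1) ω - 1))
    (m : ℕ) (ω : Ω) :
    S m ω = 2 * (((Finset.range m).filter (fun i => B (i+1) ω = 1)).card : ℝ) - m := by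
  rw [hS]
  rw [Finset.sum_sub_distrib, Finset.sum_const, ← Finset.mul_sum, Finset.card_range,
    nsmul_eq_mul, mul_one]
  congr 2
  rw [Finset.sum_congr rfl (fun i _ => show B (i+1) ω = if B (i+1) ω = 1 then (1:ℝ) else 0 from ?_),
    Finset.sum_boole]
  rcases hB01 (i+1) ω with h | h <;> simp [h]

private lemma prob_lb (hBmeas : ∀ i, Measurable (B i))
    (hBindep : iIndepFun B μ)
    (hB01 : ∀ i ω, B i ω = 0 ∨ B i ω = 1)
    (hB1 : ∀ i, μ {ω | B i ω = 1} = 1 / 2)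
    (hB0 : ∀ i, μ {ω | B i ω = 0} = 1 / 2)
    {S : ℕ → Ω → ℝ} (hS : ∀ k ω, S k ω = ∑ i ∈ Finset.range k, (2 * B (i + 1) ω - 1))
    (M : ℝ) (hM : 0 < M) :
    ∀ᶠ n : ℕ in Filter.atTop,
      ENNReal.ofReal (M / 2 * Real.exp (-(36 * M ^ 2)))
        ≤ μ {ω | M * Real.sqrt (2 * n) ≤ S (2 * n) ω} := by
  classical
  have hsqrt4 : Real.sqrt 4 = 2 := by
    rw [show (4:ℝ) = 2^2 by norm_num, Real.sqrt_sq (by norm_num : (0:ℝ) ≤ 2)]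
  have hsqrt2 : ∀ n : ℕ, Real.sqrt (2 * (n:ℝ)) ≤ 2 * Real.sqrt n := by
    intro n
    rw [Real.sqrt_mul (by norm_num : (0:ℝ) ≤ 2)]
    have h2 : Real.sqrt 2 ≤ 2 := by
      nlinarith [Real.sq_sqrt (by norm_num : (0:ℝ) ≤ 2), Real.sqrt_nonneg 2]
    have := Real.sqrt_nonneg (n:ℝ)
    nlinarith
  filter_upwards [centralBinom_lb, sqrt_nat_tendsto.eventually_ge_atTop (2 / M),
    sqrt_nat_tendsto.eventually_ge_atTop (6 * M),
    Filter.eventually_ge_atTop 1] with n hC1 hC2 hC3 hn1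
  have hn0 : (0:ℝ) < n := by exact_mod_cast hn1
  have hsn0 : (0:ℝ) < Real.sqrt n := Real.sqrt_pos.2 hn0
  have hC2' : 2 ≤ M * Real.sqrt n := by
    rw [div_le_iff₀ hM] at hC2; linarith
  set a : ℕ := ⌈M * Real.sqrt n⌉₊ with ha
  set K : ℕ := 2 * a with hK
  have haM : M * Real.sqrt n ≤ a := Nat.le_ceil _
  have haM2 : (a:ℝ) ≤ M * Real.sqrt n + 1 := by
    have := Nat.ceil_lt_add_one (by positivity : (0:ℝ) ≤ M * Real.sqrt n)
    linarith
  have hK3 : (K:ℝ) ≤ 3 * (M * Real.sqrt n) := by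
    have : (K:ℝ) = 2 * a := by push_cast [hK]; ring
    rw [this]; linarith
  have hsqn : Real.sqrt n * Real.sqrt n = n := Real.mul_self_sqrt (le_of_lt hn0)
  have h6M : 6 * M * Real.sqrt n ≤ n := by
    calc 6 * M * Real.sqrt n ≤ Real.sqrt n * Real.sqrt n := by nlinarith
    _ = n := hsqn
  have h2K : 2 * K ≤ n := by
    have : 2 * (K:ℝ) ≤ n := by nlinarith
    exact_mod_cast this
  have hKn : K ≤ n := by omega
  -- measurability of the counting function
  have hcnt : ∀ m : ℕ, Measurable (fun ω =>
      ((Finset.range m).filter (fun i => B (i+1) ω = 1)).card) := by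
    intro m
    have : (fun ω => ((Finset.range m).filter (fun i => B (i+1) ω = 1)).card)
        = fun ω => ∑ i ∈ Finset.range m, if B (i+1) ω = 1 then 1 else 0 := by
      funext ω
      rw [Finset.sum_boole, Nat.cast_id]
    rw [this]
    apply Finset.measurable_sum
    intro i _
    exact Measurable.ite (hBmeas (i+1) (measurableSet_singleton 1))
      measurable_const measurable_const
  set Ev : ℕ → Set Ω := fun j =>
    {ω | ((Finset.range (2*n)).filter (fun i => B (i+1) ω = 1)).card = n + j} with hEv
  have hEvMeas : ∀ j, MeasurableSet (Ev j) :=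
    fun j => hcnt (2*n) (measurableSet_singleton (n+j))
  have hEvMu : ∀ j, μ (Ev j) = ((2*n).choose (n+j)) * 2⁻¹ ^ (2*n) :=
    fun j => count_measure hBmeas hBindep hB01 hB1 hB0 (2*n) (n+j)
  have hsub : (⋃ j ∈ Finset.Icc a K, Ev j) ⊆ {ω | M * Real.sqrt (2 * n) ≤ S (2 * n) ω} := by
    intro ω hω
    simp only [Set.mem_iUnion, Finset.mem_Icc, exists_prop] at hω
    obtain ⟨j, ⟨haj, _⟩, hωj⟩ := hω
    have hcard : ((Finset.range (2*n)).filter (fun i => B (i+1) ω = 1)).card = n + j := hωj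
    have hval : S (2*n) ω = 2 * (j:ℝ) := by
      rw [S_val hB01 hS (2*n) ω, hcard]
      push_cast
      ring
    simp only [Set.mem_setOf_eq]
    rw [hval]
    have hja : (a:ℝ) ≤ j := by exact_mod_cast haj
    calc M * Real.sqrt (2 * (n:ℕ)) ≤ M * (2 * Real.sqrt n) := by
          apply mul_le_mul_of_nonneg_left _ (le_of_lt hM)
          push_cast
          exact hsqrt2 n
      _ = 2 * (M * Real.sqrt n) := by ring
      _ ≤ 2 * (a:ℝ) := by linarith
      _ ≤ 2 * (j:ℝ) := by linarith
  have hdisj : (↑(Finset.Icc a K) : Set ℕ).PairwiseDisjoint Ev := by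
    intro j hj j' hj' hne
    rw [Function.onFun, Set.disjoint_left]
    intro ω h h'
    have e1 : ((Finset.range (2*n)).filter (fun i => B (i+1) ω = 1)).card = n + j := h
    have e2 : ((Finset.range (2*n)).filter (fun i => B (i+1) ω = 1)).card = n + j' := h'
    exact hne (by omega)
  -- the central estimate, real-valued
  have hcbpos : (0:ℝ) < n.centralBinom := by exact_mod_cast n.centralBinom_pos
  have hq : ((2:ℝ)⁻¹) ^ (2*n) = ((4:ℝ) ^ n)⁻¹ := by
    rw [inv_pow, pow_mul]
    norm_num
  have h4pos : (0:ℝ) < 4 ^ n := by positivity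
  have hcbq : (1:ℝ) / (2 * Real.sqrt n) ≤ n.centralBinom * ((2:ℝ)⁻¹) ^ (2*n) := by
    rw [hq]
    have h := (div_le_div_iff_of_pos_right hsn0).2 hC1
    have e1 : (1:ℝ)/2 / Real.sqrt n = 1 / (2 * Real.sqrt n) := by
      rw [div_div]
    have e2 : Real.sqrt n * (n.centralBinom:ℝ) / 4^n / Real.sqrt n
        = (n.centralBinom:ℝ) * ((4:ℝ)^n)⁻¹ := by
      field_simp
    rwa [e1, e2] at h
  have hKratio : Real.exp (-(36 * M^2)) * (n.centralBinom:ℝ) ≤ ((2*n).choose (n + K) : ℝ) := by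
    have h1 : Real.exp (-(36 * M^2)) ≤ Real.exp (-(4 * (K:ℝ)^2 / n)) := by
      apply Real.exp_le_exp.2
      rw [neg_le_neg_iff, div_le_iff₀ hn0]
      have hKK : (K:ℝ) * K ≤ (3 * (M * Real.sqrt n)) * (3 * (M * Real.sqrt n)) :=
        mul_le_mul hK3 hK3 (Nat.cast_nonneg K) (by positivity)
      nlinarith [hsqn, hKK]
    calc Real.exp (-(36 * M^2)) * (n.centralBinom:ℝ)
        ≤ Real.exp (-(4 * (K:ℝ)^2 / n)) * n.centralBinom :=
          mul_le_mul_of_nonneg_right h1 hcbpos.le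
      _ ≤ (((n:ℝ) - K)/((n:ℝ) + K))^K * n.centralBinom :=
          mul_le_mul_of_nonneg_right (ratio_exp_lb n K (by omega) h2K) hcbpos.le
      _ ≤ ((2*n).choose (n + K) : ℝ) := choose_ratio n K hKn
  set c0 : ENNReal := ((2*n).choose (n+K) : ENNReal) * 2⁻¹ ^ (2*n) with hc0
  have hterm : ∀ j ∈ Finset.Icc a K, c0 ≤ μ (Ev j) := by
    intro j hj
    rw [hEvMu j, hc0]
    apply mul_le_mul_left
    exact_mod_cast Nat.cast_le.2
      (choose_anti n j K (Finset.mem_Icc.1 hj).2 hKn)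
  have hofreal : ENNReal.ofReal (((a:ℝ)+1) * ((2*n).choose (n + K) : ℝ) * ((2:ℝ)⁻¹) ^ (2*n))
      = ((a+1 : ℕ) : ENNReal) * c0 := by
    rw [ENNReal.ofReal_mul (by positivity), ENNReal.ofReal_mul (by positivity),
      ENNReal.ofReal_pow (by norm_num : (0:ℝ) ≤ 2⁻¹), hc0,
      show ((a:ℝ)+1) = ((a+1 : ℕ):ℝ) by push_cast; ring,
      ENNReal.ofReal_natCast, ENNReal.ofReal_natCast,
      ENNReal.ofReal_inv_of_pos (by norm_num : (0:ℝ) < 2), ENNReal.ofReal_ofNat,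
      mul_assoc]
  have hreal : M / 2 * Real.exp (-(36 * M ^ 2))
      ≤ ((a:ℝ)+1) * ((2*n).choose (n + K) : ℝ) * ((2:ℝ)⁻¹) ^ (2*n) := by
    calc M / 2 * Real.exp (-(36 * M ^ 2))
        = (M * Real.sqrt n) * (Real.exp (-(36 * M^2)) * ((1:ℝ)/(2 * Real.sqrt n))) := by
          field_simp
      _ ≤ ((a:ℝ)+1) * (Real.exp (-(36 * M^2)) * ((n.centralBinom:ℝ) * ((2:ℝ)⁻¹) ^ (2*n))) := by
          apply mul_le_mul (by linarith) ?_ (by positivity) (by positivity)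
          exact mul_le_mul_of_nonneg_left hcbq (Real.exp_nonneg _)
      _ = (Real.exp (-(36 * M^2)) * (n.centralBinom:ℝ)) * (((a:ℝ)+1) * ((2:ℝ)⁻¹) ^ (2*n)) := by
          ring
      _ ≤ ((2*n).choose (n + K) : ℝ) * (((a:ℝ)+1) * ((2:ℝ)⁻¹) ^ (2*n)) :=
          mul_le_mul_of_nonneg_right hKratio (by positivity)
      _ = ((a:ℝ)+1) * ((2*n).choose (n + K) : ℝ) * ((2:ℝ)⁻¹) ^ (2*n) := by ring
  calc ENNReal.ofReal (M / 2 * Real.exp (-(36 * M ^ 2)))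
      ≤ ENNReal.ofReal (((a:ℝ)+1) * ((2*n).choose (n + K) : ℝ) * ((2:ℝ)⁻¹) ^ (2*n)) :=
        ENNReal.ofReal_le_ofReal hreal
    _ = ((a+1 : ℕ) : ENNReal) * c0 := hofreal
    _ = ∑ _j ∈ Finset.Icc a K, c0 := by
        rw [Finset.sum_const, nsmul_eq_mul, Nat.card_Icc,
          show K + 1 - a = a + 1 by omega]
    _ ≤ ∑ j ∈ Finset.Icc a K, μ (Ev j) := Finset.sum_le_sum hterm
    _ = μ (⋃ j ∈ Finset.Icc a K, Ev j) :=
        (measure_biUnion_finset hdisj (fun j _ => hEvMeas j)).symm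
    _ ≤ μ {ω | M * Real.sqrt (2 * n) ≤ S (2 * n) ω} := measure_mono hsub

end Walk2

section Tail

open MeasureTheory ProbabilityTheory

private lemma freq_shift (M : ℝ) (u v : ℕ → ℝ)
    (hv : Filter.Tendsto v Filter.atTop (nhds 0))
    (h : ∀ q : ℕ, ∃ᶠ n in Filter.atTop, M - 1/((q:ℝ)+1) < u n) :
    ∀ q : ℕ, ∃ᶠ n in Filter.atTop, M - 1/((q:ℝ)+1) < u n + v n := by
  intro q
  have hq : (0:ℝ) < 1/(2*(q:ℝ)+2) := by positivity
  have hev : ∀ᶠ n in Filter.atTop, dist (v n) 0 < 1/(2*(q:ℝ)+2) :=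
    hv.eventually (Metric.ball_mem_nhds 0 hq)
  have h' := h (2*q+1)
  have hcast : M - 1/(((2*q+1:ℕ):ℝ)+1) = M - 1/(2*(q:ℝ)+2) := by
    push_cast; ring_nf
  rw [hcast] at h'
  refine (h'.and_eventually hev).mono ?_
  rintro n ⟨h1, h2⟩
  rw [Real.dist_eq, sub_zero] at h2
  have : -(1/(2*(q:ℝ)+2)) < v n := by
    rcases abs_lt.1 h2 with ⟨hl, _⟩
    linarith
  have hsum : 1/(2*(q:ℝ)+2) + 1/(2*(q:ℝ)+2) = 1/((q:ℝ)+1) := by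
    field_simp
    ring
  linarith

private lemma freq_shift_iff (M : ℝ) (u v : ℕ → ℝ)
    (hv : Filter.Tendsto v Filter.atTop (nhds 0)) :
    (∀ q : ℕ, ∃ᶠ n in Filter.atTop, M - 1/((q:ℝ)+1) < u n) ↔
    (∀ q : ℕ, ∃ᶠ n in Filter.atTop, M - 1/((q:ℝ)+1) < u n + v n) := by
  constructor
  · exact freq_shift M u v hv
  · intro h
    have := freq_shift M (fun n => u n + v n) (fun n => -v n) (by simpa using hv.neg) h
    simpa using this

private lemma rev_fatou {Ω : Type*} [MeasurableSpace Ω] {μ : Measure Ω}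
    [IsProbabilityMeasure μ]
    {A : ℕ → Set Ω} (hA : ∀ n, MeasurableSet (A n)) {c : ENNReal}
    (hc : ∀ᶠ n in Filter.atTop, c ≤ μ (A n)) :
    c ≤ μ (Filter.limsup A Filter.atTop) := by
  have hls : Filter.limsup A Filter.atTop = ⋂ k, ⋃ n, ⋃ (_ : n ≥ k), A n := by
    rw [Filter.limsup_eq_iInf_iSup_of_nat]
    simp only [Set.iSup_eq_iUnion, Set.iInf_eq_iInter]
  set U : ℕ → Set Ω := fun k => ⋃ n, ⋃ (_ : n ≥ k), A n with hU
  have hmono : Antitone U := by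
    intro k k' hkk' ω hω
    simp only [hU, Set.mem_iUnion] at hω ⊢
    obtain ⟨n, hn, h⟩ := hω
    exact ⟨n, le_trans hkk' hn, h⟩
  have hmeasU : ∀ k, NullMeasurableSet (U k) μ := fun k =>
    (MeasurableSet.iUnion (fun n => MeasurableSet.iUnion (fun _ => hA n))).nullMeasurableSet
  have htend := MeasureTheory.tendsto_measure_iInter_atTop hmeasU hmono
    ⟨0, measure_ne_top μ _⟩
  rw [hls]
  apply ge_of_tendsto htend
  obtain ⟨N, hN⟩ := Filter.eventually_atTop.1 hc
  filter_upwards [Filter.eventually_ge_atTop N] with k hk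
  refine le_trans (hN k hk) (measure_mono ?_)
  intro ω hω
  exact Set.mem_iUnion.2 ⟨k, Set.mem_iUnion.2 ⟨le_rfl, hω⟩⟩

end Tail

open MeasureTheory ProbabilityTheory Filter

/-- With probability 1, `limsup Sₙ/√n = +∞` for the simple symmetric random walk. -/
theorem limsup_div_sqrt_eq_top
    (Ω : Type*) [MeasurableSpace Ω] (μ : Measure Ω) [IsProbabilityMeasure μ]
    (B : ℕ → Ω → ℝ) (hBmeas : ∀ i, Measurable (B i))
    (hBindep : iIndepFun B μ)
    (hB01 : ∀ i ω, B i ω = 0 ∨ B i ω = 1)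
    (hB1 : ∀ i, μ {ω | B i ω = 1} = 1 / 2)
    (hB0 : ∀ i, μ {ω | B i ω = 0} = 1 / 2)
    (S : ℕ → Ω → ℝ)
    (hS : ∀ k ω, S k ω = ∑ i ∈ Finset.range k, (2 * B (i + 1) ω - 1)) :
    ∀ᵐ ω ∂μ,
      Filter.limsup (fun n : ℕ => ((S n ω / Real.sqrt n : ℝ) : EReal)) atTop = ⊤ := by
  classical
  set s : ℕ → MeasurableSpace Ω := fun i => MeasurableSpace.comap (B i) inferInstance with hs
  have h_le : ∀ i, s i ≤ ‹MeasurableSpace Ω› := fun i => (hBmeas i).comap_le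
  have h_indep : iIndep s μ := hBindep.iIndep
  set E : ℝ → Set Ω := fun M =>
    {ω | ∀ q : ℕ, ∃ᶠ n in atTop, M - 1/((q:ℝ)+1) < S n ω / Real.sqrt n} with hE
  have hvten : ∀ c : ℝ, Tendsto (fun n : ℕ => c / Real.sqrt n) atTop (nhds 0) := by
    intro c
    have h1 : Tendsto (fun n : ℕ => (Real.sqrt n)⁻¹) atTop (nhds 0) :=
      sqrt_nat_tendsto.inv_tendsto_atTop
    have := h1.const_mul c
    simpa [div_eq_mul_inv] using this
  -- pointwise tail characterization
  have key : ∀ (M : ℝ) (k : ℕ) (ω : Ω),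
      ((∀ q : ℕ, ∃ᶠ n in atTop, M - 1/((q:ℝ)+1) < S n ω / Real.sqrt n) ↔
       (∀ q : ℕ, ∃ᶠ n in atTop, M - 1/((q:ℝ)+1) < (S n ω - S k ω) / Real.sqrt n)) := by
    intro M k ω
    have h := freq_shift_iff M (fun n => S n ω / Real.sqrt n)
      (fun n => -(S k ω / Real.sqrt n)) (by simpa using (hvten (S k ω)).neg)
    have h2 : ∀ n:ℕ, S n ω / Real.sqrt n + -(S k ω / Real.sqrt n)
        = (S n ω - S k ω) / Real.sqrt n := by
      intro n; rw [sub_div]; ring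
    simpa only [h2] using h
  -- tail measurability
  have hEtail : ∀ M : ℝ, MeasurableSet[Filter.limsup s atTop] (E M) := by
    intro M
    rw [Filter.limsup_eq_iInf_iSup_of_nat, MeasurableSpace.measurableSet_iInf]
    intro k
    have hBk : ∀ i, i ≥ k → Measurable[⨆ i, ⨆ (_ : i ≥ k), s i] (B (i+1)) := by
      intro i hik
      have hle : s (i+1) ≤ ⨆ i, ⨆ (_ : i ≥ k), s i :=
        le_iSup_of_le (i+1) (le_iSup_of_le (by omega) le_rfl)
      exact measurable_iff_comap_le.2 hle
    have hWmeas : ∀ n, n ≥ k →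
        Measurable[⨆ i, ⨆ (_ : i ≥ k), s i] (fun ω => (S n ω - S k ω) / Real.sqrt n) := by
      intro n hn
      have heq : (fun ω => S n ω - S k ω)
          = fun ω => ∑ i ∈ Finset.Ico k n, (2 * B (i+1) ω - 1) := by
        funext ω
        rw [hS, hS]
        exact (Finset.sum_Ico_eq_sub _ hn).symm
      have hsum : Measurable[⨆ i, ⨆ (_ : i ≥ k), s i] (fun ω => S n ω - S k ω) := by
        rw [heq]
        apply Finset.measurable_sum
        intro i hi
        have hik : i ≥ k := (Finset.mem_Ico.1 hi).1
        exact ((hBk i hik).const_mul 2).sub_const 1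
      exact hsum.div_const _
    have hrw : E M = ⋂ q : ℕ, ⋂ j : ℕ, ⋃ n, ⋃ (_ : n ≥ j + k),
        {ω | M - 1/((q:ℝ)+1) < (S n ω - S k ω) / Real.sqrt n} := by
      ext ω
      simp only [hE, Set.mem_setOf_eq, Set.mem_iInter, Set.mem_iUnion]
      constructor
      · intro h q j
        have h2 := (key M k ω).1 h q
        obtain ⟨n, hn, hlt⟩ := frequently_atTop.1 h2 (j + k)
        exact ⟨n, hn, hlt⟩
      · intro h
        rw [key M k ω]
        intro q
        rw [frequently_atTop]
        intro j
        obtain ⟨n, hn, hlt⟩ := h q j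
        exact ⟨n, by omega, hlt⟩
    rw [hrw]
    apply MeasurableSet.iInter; intro q
    apply MeasurableSet.iInter; intro j
    apply MeasurableSet.iUnion; intro n
    apply MeasurableSet.iUnion; intro hn
    exact measurableSet_lt measurable_const (hWmeas n (by omega))
  have hEmeasAmb : ∀ M : ℝ, MeasurableSet (E M) := fun M =>
    (Filter.limsup_le_iSup.trans (iSup_le h_le)) _ (hEtail M)
  have hE01 : ∀ M : ℝ, μ (E M) = 0 ∨ μ (E M) = 1 := fun M =>
    measure_zero_or_one_of_measurableSet_limsup_atTop h_le h_indep (hEtail M)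
  -- positive lower bound for E M, M > 0
  have hElb : ∀ M : ℝ, 0 < M → μ (E M) = 1 := by
    intro M hM
    rcases hE01 M with h0 | h1
    · exfalso
      set A : ℕ → Set Ω := fun n => {ω | M * Real.sqrt (2*n) ≤ S (2*n) ω} with hA
      have hAmeas : ∀ n, MeasurableSet (A n) := by
        intro n
        have hSm : Measurable (S (2*n)) := by
          have heq : S (2*n) = fun ω => ∑ i ∈ Finset.range (2*n), (2*B (i+1) ω - 1) :=
            funext (hS (2*n))
          rw [heq]
          exact Finset.measurable_sum _ (fun i _ => ((hBmeas (i+1)).const_mul 2).sub_const 1)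
        exact measurableSet_le measurable_const hSm
      have hclb := rev_fatou hAmeas (prob_lb hBmeas hBindep hB01 hB1 hB0 hS M hM)
      have hsubE : Filter.limsup A atTop ⊆ E M := by
        intro ω hω
        rw [Filter.mem_limsup_iff_frequently_mem] at hω
        have hfreq : ∃ᶠ m : ℕ in atTop, M * Real.sqrt m ≤ S m ω := by
          apply (tendsto_atTop_atTop.2 (fun b => ⟨b, fun a ha => by omega⟩) :
            Tendsto (fun n : ℕ => 2*n) atTop atTop).frequently
          apply hω.mono
          intro n hn
          simpa [hA] using hn
        intro q
        have hev : ∀ᶠ m : ℕ in atTop, 1 ≤ m := eventually_ge_atTop 1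
        apply ((hfreq.and_eventually hev).mono ?_)
        rintro m ⟨h1, h2⟩
        have hm0 : (0:ℝ) < Real.sqrt m := Real.sqrt_pos.2 (by exact_mod_cast h2)
        have : M ≤ S m ω / Real.sqrt m := by
          rw [le_div_iff₀ hm0]
          linarith
        have hq : (0:ℝ) < 1/((q:ℝ)+1) := by positivity
        linarith
      have hpos : (0:ENNReal) < ENNReal.ofReal (M / 2 * Real.exp (-(36 * M ^ 2))) :=
        ENNReal.ofReal_pos.2 (by positivity)
      have : (0:ENNReal) < μ (E M) := lt_of_lt_of_le hpos (le_trans hclb (measure_mono hsubE))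
      rw [h0] at this
      exact lt_irrefl _ this
    · exact h1
  -- conclusion
  have hae : ∀ᵐ ω ∂μ, ∀ m : ℕ, ω ∈ E ((m:ℝ)+1) := by
    rw [ae_all_iff]
    intro m
    have h1 := hElb ((m:ℝ)+1) (by positivity)
    have hcompl : μ (E ((m:ℝ)+1))ᶜ = 0 := by
      rw [measure_compl (hEmeasAmb _) (measure_ne_top μ _), h1, measure_univ, tsub_self]
    exact ae_iff.2 hcompl
  filter_upwards [hae] with ω hω
  rw [EReal.eq_top_iff_forall_lt]
  intro y
  obtain ⟨m, hym⟩ := exists_nat_gt y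
  have hfreq := hω m 0
  have hfreq' : ∃ᶠ n in atTop, (m:ℝ) < S n ω / Real.sqrt n := by
    apply hfreq.mono
    intro n hn
    norm_num at hn
    linarith
  have hle : ((m:ℝ) : EReal) ≤ limsup (fun n : ℕ => ((S n ω / Real.sqrt n : ℝ) : EReal)) atTop := by
    apply le_limsup_of_frequently_le'
    apply hfreq'.mono
    intro n hn
    exact le_of_lt (EReal.coe_lt_coe_iff.2 hn)
  exact lt_of_lt_of_le (EReal.coe_lt_coe_iff.2 hym) hle
end

section
/- For all integers 0 < k < n, exp(−n/(6·k·(n−k))) ≤ p_{2k,2n}/d_{k,n} ≤ exp(n/(24·k·(n−k))), where p_{2k,2n}/d_{k,n} = π·√(k(n−k))·binom(2k,k)·binom(2(n−k),n−k)·2^{−2n}. -/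
open Real Filter Stirling Topology

noncomputable def aSeq (j : ℕ) : ℝ :=
  Real.sqrt (Real.pi * j) * (Nat.centralBinom j : ℝ) / 4 ^ j

lemma aSeq_nonneg (j : ℕ) : 0 ≤ aSeq j := by unfold aSeq; positivity

lemma aSeq_pos (j : ℕ) (hj : 1 ≤ j) : 0 < aSeq j := by
  unfold aSeq
  have h1 : (0:ℝ) < Nat.centralBinom j := by exact_mod_cast Nat.centralBinom_pos j
  have h2 : (0:ℝ) < Real.pi * j := by
    have : (0:ℝ) < j := by exact_mod_cast hj
    positivity
  positivity

lemma aSeq_sq (j : ℕ) : aSeq j ^ 2 = Real.pi * j * (Nat.centralBinom j : ℝ) ^ 2 / 16 ^ j := by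
  unfold aSeq
  rw [div_pow, mul_pow, Real.sq_sqrt (by positivity)]
  congr 1
  rw [← pow_mul, mul_comm j 2, pow_mul]
  norm_num

lemma aSeq_rec (j : ℕ) :
    aSeq (j + 1) ^ 2 * (4 * j * (j + 1)) = aSeq j ^ 2 * (2 * j + 1) ^ 2 := by
  have key : ((j : ℝ) + 1) * (Nat.centralBinom (j + 1) : ℝ)
      = 2 * (2 * j + 1) * (Nat.centralBinom j : ℝ) := by
    exact_mod_cast Nat.succ_mul_centralBinom_succ j
  have h2 : (((j : ℝ) + 1) * (Nat.centralBinom (j + 1) : ℝ)) ^ 2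
      = (2 * (2 * (j:ℝ) + 1) * (Nat.centralBinom j : ℝ)) ^ 2 := by rw [key]
  rw [aSeq_sq, aSeq_sq]
  have h16 : (16:ℝ) ^ (j+1) = 16 * 16 ^ j := by ring
  push_cast
  rw [h16]
  have hpos : (0:ℝ) < 16 ^ j := by positivity
  field_simp
  linear_combination (4 * (j:ℝ)) * h2

lemma aSeq_mono : Monotone aSeq := by
  apply monotone_nat_of_le_succ
  intro j
  rcases Nat.eq_zero_or_pos j with h | h
  · subst h
    have : aSeq 0 = 0 := by simp [aSeq]
    rw [this]; exact aSeq_nonneg 1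
  · have hrec := aSeq_rec j
    have hj : (1:ℝ) ≤ j := by exact_mod_cast h
    have hD : (0:ℝ) < 4 * j * (j+1) := by positivity
    have hsq : aSeq j ^ 2 ≤ aSeq (j+1) ^ 2 := by
      have h1 : aSeq j ^ 2 * (4 * (j:ℝ) * (j+1)) ≤ aSeq j ^ 2 * (2 * j + 1)^2 :=
        mul_le_mul_of_nonneg_left (by nlinarith) (sq_nonneg _)
      rw [← hrec] at h1
      exact le_of_mul_le_mul_right h1 hD
    have := Real.sqrt_le_sqrt hsq
    rwa [Real.sqrt_sq (aSeq_nonneg j), Real.sqrt_sq (aSeq_nonneg (j+1))] at this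

lemma aSeq_eq_stirling (j : ℕ) (hj : 1 ≤ j) :
    aSeq j = Real.sqrt Real.pi * stirlingSeq (2 * j) / (stirlingSeq j) ^ 2 := by
  have hjR : (0:ℝ) < j := by exact_mod_cast hj
  have hfac : (0:ℝ) < (j.factorial : ℝ) := by exact_mod_cast j.factorial_pos
  have hcb : (Nat.centralBinom j : ℝ) = ((2*j).factorial : ℝ) / ((j.factorial : ℝ) * (j.factorial : ℝ)) := by
    rw [Nat.centralBinom_eq_two_mul_choose, Nat.cast_choose ℝ (by omega),
      show 2 * j - j = j from by omega]
  rw [aSeq, hcb, stirlingSeq, stirlingSeq]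
  have h2j : ((2*j : ℕ) : ℝ) = 2 * j := by push_cast; ring
  rw [h2j]
  have hsqj : Real.sqrt (Real.pi * j) = Real.sqrt Real.pi * Real.sqrt j := Real.sqrt_mul pi_pos.le _
  have hs2 : Real.sqrt (2 * (2 * (j:ℝ))) = 2 * Real.sqrt j := by
    rw [show (2 : ℝ) * (2 * (j:ℝ)) = 4 * j by ring, Real.sqrt_mul (by norm_num),
      show (4:ℝ) = 2^2 by norm_num, Real.sqrt_sq (by norm_num)]
  have hpow : (2 * (j:ℝ) / Real.exp 1) ^ (2 * j) = 4 ^ j * ((j:ℝ) / Real.exp 1) ^ (2 * j) := by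
    rw [show 2 * (j:ℝ) / Real.exp 1 = 2 * ((j:ℝ)/Real.exp 1) by ring, mul_pow,
      show (2:ℝ) ^ (2 * j) = 4 ^ j from by rw [pow_mul]; norm_num]
  rw [hsqj, hs2, hpow]
  have hsj : (0:ℝ) < Real.sqrt j := Real.sqrt_pos.mpr hjR
  have hje : (0:ℝ) < ((j:ℝ) / Real.exp 1) ^ j := by positivity
  have h2jfac : (0:ℝ) < ((2*j).factorial : ℝ) := by exact_mod_cast (2*j).factorial_pos
  have hpj : ((j:ℝ) / Real.exp 1) ^ (2*j) = (((j:ℝ)/Real.exp 1) ^ j) ^ 2 := by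
    rw [← pow_mul]; ring_nf
  rw [hpj]
  have hs2j : Real.sqrt (2 * (j:ℝ)) ≠ 0 := by positivity
  field_simp
  ring_nf
  rw [Real.sq_sqrt hjR.le, Real.sq_sqrt (by positivity : (0:ℝ) ≤ j * 2)]

lemma aSeq_tendsto : Tendsto aSeq atTop (𝓝 1) := by
  have h := Stirling.tendsto_stirlingSeq_sqrt_pi
  have h2m : Tendsto (fun j : ℕ => 2 * j) atTop atTop :=
    tendsto_atTop_atTop.mpr fun b => ⟨b, fun a ha => by omega⟩
  have h2 : Tendsto (fun j => stirlingSeq (2 * j)) atTop (𝓝 (Real.sqrt Real.pi)) := h.comp h2m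
  have hne : (Real.sqrt Real.pi) ^ 2 ≠ 0 := by positivity
  have hmain : Tendsto (fun j => Real.sqrt Real.pi * stirlingSeq (2 * j) / (stirlingSeq j) ^ 2)
      atTop (𝓝 (Real.sqrt Real.pi * Real.sqrt Real.pi / (Real.sqrt Real.pi) ^ 2)) :=
    (tendsto_const_nhds.mul h2).div (h.pow 2) hne
  have hval : Real.sqrt Real.pi * Real.sqrt Real.pi / (Real.sqrt Real.pi) ^ 2 = 1 := by
    rw [sq]
    exact div_self (by positivity)
  rw [hval] at hmain
  refine hmain.congr' ?_
  filter_upwards [eventually_ge_atTop 1] with j hj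
  exact (aSeq_eq_stirling j hj).symm

lemma aSeq_le_one (j : ℕ) : aSeq j ≤ 1 := aSeq_mono.ge_of_tendsto aSeq_tendsto j

lemma aSeq_anti_aux (m : ℕ) (hm : 1 ≤ m) :
    aSeq (m + 1) ^ 2 * Real.exp (1 / (3 * (m + 1))) ≤ aSeq m ^ 2 * Real.exp (1 / (3 * m)) := by
  have hmR : (1:ℝ) ≤ m := by exact_mod_cast hm
  set q : ℝ := 1 / (3 * m * (m + 1)) with hq
  have hqsum : (1:ℝ) / (3 * m) = 1 / (3 * (m + 1)) + q := by
    rw [hq]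
    field_simp
  have hE1 : (0:ℝ) < Real.exp (1 / (3 * ((m:ℝ) + 1))) := Real.exp_pos _
  have hS : (2 * (m:ℝ) + 1) ^ 2 ≤ 4 * m * (m + 1) * Real.exp q := by
    have h1 : q + 1 ≤ Real.exp q := Real.add_one_le_exp q
    have hq4 : (1:ℝ) ≤ (4 * (m:ℝ) * (m + 1)) * q := by
      rw [hq, mul_one_div, le_div_iff₀ (by positivity)]
      nlinarith
    nlinarith [mul_le_mul_of_nonneg_left h1 (by positivity : (0:ℝ) ≤ 4 * (m:ℝ) * (m + 1))]
  have hrec := aSeq_rec m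
  have hD : (0:ℝ) < 4 * m * (m + 1) := by positivity
  have h1 : aSeq (m+1) ^ 2 * Real.exp (1 / (3 * ((m:ℝ) + 1))) * (4 * m * (m + 1))
      = aSeq m ^ 2 * ((2 * m + 1) ^ 2 * Real.exp (1 / (3 * ((m:ℝ) + 1)))) := by
    push_cast at hrec ⊢
    linear_combination Real.exp (1 / (3 * ((m:ℝ) + 1))) * hrec
  have h2 : aSeq m ^ 2 * ((2 * (m:ℝ) + 1) ^ 2 * Real.exp (1 / (3 * ((m:ℝ) + 1))))
      ≤ aSeq m ^ 2 * (4 * m * (m + 1) * Real.exp q * Real.exp (1 / (3 * ((m:ℝ) + 1)))) := by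
    apply mul_le_mul_of_nonneg_left _ (sq_nonneg _)
    exact mul_le_mul_of_nonneg_right hS hE1.le
  have h3 : aSeq m ^ 2 * (4 * (m:ℝ) * (m + 1) * Real.exp q * Real.exp (1 / (3 * ((m:ℝ) + 1))))
      = aSeq m ^ 2 * Real.exp (1 / (3 * (m:ℝ))) * (4 * m * (m + 1)) := by
    rw [hqsum, Real.exp_add]
    ring
  have h4 : aSeq (m+1) ^ 2 * Real.exp (1 / (3 * ((m:ℝ) + 1))) * (4 * m * (m + 1))
      ≤ aSeq m ^ 2 * Real.exp (1 / (3 * (m:ℝ))) * (4 * m * (m + 1)) := by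
    rw [h1, ← h3]; exact h2
  have := le_of_mul_le_mul_right h4 hD
  convert this using 3 <;> push_cast <;> ring

lemma exp_le_aSeq (j : ℕ) (hj : 1 ≤ j) : Real.exp (-(1 / (6 * j))) ≤ aSeq j := by
  set b : ℕ → ℝ := fun i => aSeq (i + 1) * Real.exp (1 / (6 * (i + 1))) with hb
  have hbsq : ∀ i : ℕ, b i ^ 2 = aSeq (i + 1) ^ 2 * Real.exp (1 / (3 * ((i:ℝ) + 1))) := by
    intro i
    rw [hb]
    simp only
    rw [mul_pow, ← Real.exp_nat_mul]
    · push_cast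
      congr 2
      field_simp
      ring
  have hbnn : ∀ i : ℕ, 0 ≤ b i := fun i => mul_nonneg (aSeq_nonneg _) (Real.exp_pos _).le
  have hbanti : Antitone b := by
    apply antitone_nat_of_succ_le
    intro i
    have h := aSeq_anti_aux (i + 1) (by omega)
    have hsq : b (i + 1) ^ 2 ≤ b i ^ 2 := by
      rw [hbsq, hbsq]
      convert h using 4 <;> push_cast <;> ring
    have := Real.sqrt_le_sqrt hsq
    rwa [Real.sqrt_sq (hbnn _), Real.sqrt_sq (hbnn _)] at this
  have hbtend : Tendsto b atTop (𝓝 1) := by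
    have h1 : Tendsto (fun i : ℕ => aSeq (i + 1)) atTop (𝓝 1) :=
      aSeq_tendsto.comp (tendsto_add_atTop_nat 1)
    have harg : Tendsto (fun i : ℕ => 1 / (6 * ((i:ℝ) + 1))) atTop (𝓝 0) := by
      apply Tendsto.div_atTop tendsto_const_nhds
      apply Tendsto.const_mul_atTop (by norm_num : (0:ℝ) < 6)
      exact tendsto_atTop_add_const_right _ 1 tendsto_natCast_atTop_atTop
    have h2 : Tendsto (fun i : ℕ => Real.exp (1 / (6 * ((i:ℝ) + 1)))) atTop (𝓝 1) := by
      have := (Real.continuous_exp.continuousAt (x := 0)).tendsto.comp harg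
      rwa [Real.exp_zero] at this
    have h3 := h1.mul h2
    rw [mul_one] at h3
    exact h3
  have hge : 1 ≤ b (j - 1) := hbanti.le_of_tendsto hbtend _
  have hjj : j - 1 + 1 = j := by omega
  rw [hb] at hge
  simp only [hjj] at hge
  have hj1 : ((j - 1 : ℕ) : ℝ) + 1 = (j : ℝ) := by
    have : ((j - 1 : ℕ) : ℝ) = (j : ℝ) - 1 := by
      have : (1:ℝ) ≤ j := by exact_mod_cast hj
      push_cast [Nat.cast_sub hj]
      ring
    rw [this]; ring
  rw [hj1] at hge
  have hepos : (0:ℝ) < Real.exp (1 / (6 * (j:ℝ))) := Real.exp_pos _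
  rw [Real.exp_neg]
  rw [inv_le_iff_one_le_mul₀ hepos] at *
  · linarith [mul_comm (aSeq j) (Real.exp (1 / (6 * (j:ℝ))))]

/-- For `0 < k < n`,
`exp(-n/(6k(n-k))) ≤ p_{2k,2n}/d_{k,n} ≤ exp(n/(24k(n-k)))`, where
`p_{2k,2n}/d_{k,n} = π·√(k(n-k))·C(2k,k)·C(2(n-k),n-k)·2^{-2n}`. -/
theorem ratio_p_d_bounds (n k : ℕ) (hk : 0 < k) (hkn : k < n) :
    Real.exp (-(n : ℝ) / (6 * k * (n - k : ℕ))) ≤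
        Real.pi * Real.sqrt ((k * (n - k) : ℕ) : ℝ) *
          ((Nat.choose (2 * k) k : ℝ) * (Nat.choose (2 * (n - k)) (n - k) : ℝ) / 2 ^ (2 * n)) ∧
      Real.pi * Real.sqrt ((k * (n - k) : ℕ) : ℝ) *
          ((Nat.choose (2 * k) k : ℝ) * (Nat.choose (2 * (n - k)) (n - k) : ℝ) / 2 ^ (2 * n)) ≤
        Real.exp ((n : ℝ) / (24 * k * (n - k : ℕ))) := by
  set m := n - k with hm
  have hm1 : 1 ≤ m := by omega
  have hknm : k + m = n := by omega
  have hk0 : ((k:ℝ)) ≠ 0 := by positivity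
  have hm0 : ((m:ℝ)) ≠ 0 := by
    have : (0:ℝ) < m := by exact_mod_cast hm1
    positivity
  have hprod : Real.pi * Real.sqrt ((k * m : ℕ) : ℝ) *
      ((Nat.choose (2 * k) k : ℝ) * (Nat.choose (2 * m) m : ℝ) / 2 ^ (2 * n)) =
      aSeq k * aSeq m := by
    unfold aSeq
    rw [← Nat.centralBinom_eq_two_mul_choose, ← Nat.centralBinom_eq_two_mul_choose]
    have hsqrt : Real.sqrt ((k * m : ℕ) : ℝ) = Real.sqrt k * Real.sqrt m := by
      push_cast
      rw [Real.sqrt_mul (Nat.cast_nonneg k)]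
    have hpi : Real.sqrt (Real.pi * k) = Real.sqrt Real.pi * Real.sqrt k :=
      Real.sqrt_mul pi_pos.le _
    have hpm : Real.sqrt (Real.pi * m) = Real.sqrt Real.pi * Real.sqrt m :=
      Real.sqrt_mul pi_pos.le _
    have hpisq : Real.sqrt Real.pi * Real.sqrt Real.pi = Real.pi := Real.mul_self_sqrt pi_pos.le
    have hpow : (2:ℝ) ^ (2 * n) = 4 ^ k * 4 ^ m := by
      rw [← hknm, pow_mul]
      norm_num [pow_add]
    rw [hsqrt, hpi, hpm, hpow]
    have h4k : ((4:ℝ)) ^ k ≠ 0 := by positivity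
    have h4m : ((4:ℝ)) ^ m ≠ 0 := by positivity
    rw [← hpisq]
    field_simp
    rw [Real.sq_sqrt (sq_nonneg (Real.sqrt Real.pi))]
    ring
  rw [hprod]
  constructor
  · have hexp : Real.exp (-(n:ℝ) / (6 * k * m)) =
        Real.exp (-(1 / (6 * (k:ℝ)))) * Real.exp (-(1 / (6 * (m:ℝ)))) := by
      rw [← Real.exp_add]
      congr 1
      have hn : (n:ℝ) = k + m := by exact_mod_cast hknm.symm
      rw [hn]
      field_simp
      ring
    rw [hexp]
    exact mul_le_mul (exp_le_aSeq k hk) (exp_le_aSeq m hm1) (Real.exp_pos _).le (aSeq_nonneg _)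
  · calc aSeq k * aSeq m ≤ 1 :=
          mul_le_one₀ (aSeq_le_one k) (aSeq_nonneg m) (aSeq_le_one m)
      _ ≤ Real.exp ((n:ℝ) / (24 * k * m)) := Real.one_le_exp (by positivity)
end

section
/- For every real δ with 0 < δ ≤ 1/2 and all integers 0 < k < n satisfying δ ≤ k/n ≤ 1 − δ, it holds that |p_{2k,2n} − d_{k,n}| ≤ 1/(6·π·n²·(δ(1−δ))^{3/2}). -/
open Filter Real Topology

noncomputable def Abc (m : ℕ) : ℝ := (Nat.choose (2 * m) m : ℝ) / 4 ^ m

lemma Abc_pos (m : ℕ) : 0 < Abc m := by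
  unfold Abc
  have : 0 < Nat.choose (2 * m) m := Nat.choose_pos (by omega)
  positivity

lemma Abc_succ (m : ℕ) : Abc (m + 1) = Abc m * ((2 * m + 1) / (2 * m + 2)) := by
  have h := Nat.succ_mul_centralBinom_succ m
  have h' : ((m : ℝ) + 1) * (Nat.choose (2 * (m + 1)) (m + 1) : ℝ)
      = 2 * (2 * m + 1) * (Nat.choose (2 * m) m : ℝ) := by
    exact_mod_cast h
  unfold Abc
  have h4 : (4 : ℝ) ^ (m + 1) = 4 ^ m * 4 := by ring
  rw [h4]
  field_simp
  nlinarith [h', pow_pos (show (0:ℝ) < 4 by norm_num) m]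

lemma Abc_sq_W (m : ℕ) : Abc m ^ 2 * (2 * m + 1) * Real.Wallis.W m = 1 := by
  have hc : (Nat.choose (2 * m) m : ℝ) * (Nat.factorial m : ℝ) * (Nat.factorial m : ℝ)
      = (Nat.factorial (2 * m) : ℝ) := by
    have h := Nat.choose_mul_factorial_mul_factorial (show m ≤ 2 * m by omega)
    have h0 : 2 * m - m = m := by omega
    rw [h0] at h
    exact_mod_cast h
  rw [Real.Wallis.W_eq_factorial_ratio]
  unfold Abc
  have hf : (Nat.factorial (2 * m) : ℝ) ≠ 0 := by positivity
  have hfm : (Nat.factorial m : ℝ) ≠ 0 := by positivity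
  have h4 : ((4 : ℝ)) ^ m ≠ 0 := by positivity
  have h2 : ((2 : ℝ)) ^ (4 * m) = (4 : ℝ) ^ m * 4 ^ m := by
    rw [pow_mul, ← mul_pow]; norm_num
  have h21 : (0:ℝ) < 2 * m + 1 := by positivity
  field_simp
  rw [h2]
  linear_combination (4:ℝ) ^ m * (4:ℝ) ^ m *
    ((Nat.choose (2 * m) m : ℝ) * (Nat.factorial m : ℝ) * (Nat.factorial m : ℝ) +
      (Nat.factorial (2 * m) : ℝ)) * hc

lemma Abc_tendsto (c : ℝ) :
    Tendsto (fun m : ℕ => π * Abc m ^ 2 * (m + c)) atTop (𝓝 1) := by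
  have hW := Real.Wallis.tendsto_W_nhds_pi_div_two
  have hWi : Tendsto (fun m : ℕ => (Real.Wallis.W m)⁻¹) atTop (𝓝 (π / 2)⁻¹) :=
    hW.inv₀ (by positivity)
  have h1 : Tendsto (fun m : ℕ => (2 : ℝ) * m + 1) atTop atTop := by
    apply Filter.tendsto_atTop_add_const_right
    exact (tendsto_natCast_atTop_atTop).const_mul_atTop two_pos
  have hinv : Tendsto (fun m : ℕ => ((2 : ℝ) * m + 1)⁻¹) atTop (𝓝 0) :=
    h1.inv_tendsto_atTop
  have heq : (fun m : ℕ => π * Abc m ^ 2 * (m + c))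
      = fun m : ℕ => (π / 2 + (π * (2 * c - 1) / 2) * (((2 : ℝ) * m + 1)⁻¹)) *
          (Real.Wallis.W m)⁻¹ := by
    funext m
    have hw := Abc_sq_W m
    have hWpos := Real.Wallis.W_pos m
    have h21 : (0:ℝ) < 2 * m + 1 := by positivity
    have hA2 : Abc m ^ 2 = ((2 * (m:ℝ) + 1) * Real.Wallis.W m)⁻¹ :=
      eq_inv_of_mul_eq_one_right (by linear_combination hw)
    rw [hA2]
    field_simp
    ring
  rw [heq]
  have hmul := ((hinv.const_mul (π * (2 * c - 1) / 2)).const_add (π / 2)).mul hWi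
  simp only [mul_zero, add_zero] at hmul
  convert hmul using 2
  exact (mul_inv_cancel₀ (by positivity)).symm

lemma Abc_sq_upper (m : ℕ) : π * Abc m ^ 2 * (m + 1 / 4) ≤ 1 := by
  refine Monotone.ge_of_tendsto ?_ (Abc_tendsto (1 / 4)) m
  apply monotone_nat_of_le_succ
  intro j
  have hA := Abc_pos j
  have h2 : (0 : ℝ) < 2 * j + 2 := by positivity
  have key : ((j : ℝ) + 1 / 4) ≤ ((2 * j + 1) / (2 * j + 2)) ^ 2 * ((j + 1 : ℕ) + 1 / 4) := by
    rw [div_pow, div_mul_eq_mul_div, le_div_iff₀ (by positivity)]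
    push_cast
    nlinarith [sq_nonneg ((j : ℝ))]
  calc π * Abc j ^ 2 * (j + 1 / 4)
      ≤ π * Abc j ^ 2 * (((2 * j + 1) / (2 * j + 2)) ^ 2 * ((j + 1 : ℕ) + 1 / 4)) := by
        apply mul_le_mul_of_nonneg_left key (by positivity)
    _ = π * Abc (j + 1) ^ 2 * ((j + 1 : ℕ) + 1 / 4) := by
        rw [Abc_succ, mul_pow]; push_cast; ring

lemma Abc_sq_lower (m : ℕ) : 1 ≤ π * Abc m ^ 2 * (m + 1 / 3) := by
  refine Antitone.le_of_tendsto ?_ (Abc_tendsto (1 / 3)) m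
  apply antitone_nat_of_succ_le
  intro j
  have hA := Abc_pos j
  have h2 : (0 : ℝ) < 2 * j + 2 := by positivity
  have key : ((2 * j + 1) / (2 * j + 2)) ^ 2 * ((j + 1 : ℕ) + 1 / 3) ≤ ((j : ℝ) + 1 / 3) := by
    rw [div_pow, div_mul_eq_mul_div, div_le_iff₀ (by positivity)]
    push_cast
    nlinarith [sq_nonneg ((j : ℝ))]
  calc π * Abc (j + 1) ^ 2 * ((j + 1 : ℕ) + 1 / 3)
      = π * Abc j ^ 2 * (((2 * j + 1) / (2 * j + 2)) ^ 2 * ((j + 1 : ℕ) + 1 / 3)) := by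
        rw [Abc_succ, mul_pow]; push_cast; ring
    _ ≤ π * Abc j ^ 2 * ((j : ℝ) + 1 / 3) := by
        apply mul_le_mul_of_nonneg_left key (by positivity)

lemma Abc_le (m : ℕ) : Abc m ≤ 1 / Real.sqrt (π * (m + 1 / 4)) := by
  have h := Abc_sq_upper m
  have hp : (0 : ℝ) < π * (m + 1 / 4) := by positivity
  have h2 : Abc m ^ 2 ≤ 1 / (π * (m + 1 / 4)) := by
    rw [le_div_iff₀ hp]; linarith [h]
  have := Real.sqrt_le_sqrt h2
  rwa [Real.sqrt_sq (Abc_pos m).le, one_div, Real.sqrt_inv, ← one_div] at this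

lemma le_Abc (m : ℕ) : 1 / Real.sqrt (π * (m + 1 / 3)) ≤ Abc m := by
  have h := Abc_sq_lower m
  have hp : (0 : ℝ) < π * (m + 1 / 3) := by positivity
  have h2 : 1 / (π * (m + 1 / 3)) ≤ Abc m ^ 2 := by
    rw [div_le_iff₀ hp]; linarith [h]
  have := Real.sqrt_le_sqrt h2
  rwa [Real.sqrt_sq (Abc_pos m).le, one_div, Real.sqrt_inv, ← one_div] at this

lemma sqrt_pi_mul (a b : ℝ) (ha : 0 ≤ a) (hb : 0 ≤ b) :
    Real.sqrt (π * a) * Real.sqrt (π * b) = π * Real.sqrt (a * b) := by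
  rw [← Real.sqrt_mul (by positivity), show π * a * (π * b) = π ^ 2 * (a * b) by ring,
    Real.sqrt_mul (by positivity), Real.sqrt_sq Real.pi_pos.le]

lemma prod_upper (k l : ℕ) :
    Abc k * Abc l ≤ 1 / (π * Real.sqrt (((k : ℝ) + 1 / 4) * ((l : ℝ) + 1 / 4))) := by
  calc Abc k * Abc l
      ≤ (1 / Real.sqrt (π * (k + 1 / 4))) * (1 / Real.sqrt (π * (l + 1 / 4))) :=
        mul_le_mul (Abc_le k) (Abc_le l) (Abc_pos l).le (by positivity)
    _ = 1 / (π * Real.sqrt (((k : ℝ) + 1 / 4) * ((l : ℝ) + 1 / 4))) := by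
        rw [div_mul_div_comm, one_mul, sqrt_pi_mul _ _ (by positivity) (by positivity)]

lemma prod_lower (k l : ℕ) :
    1 / (π * Real.sqrt (((k : ℝ) + 1 / 3) * ((l : ℝ) + 1 / 3))) ≤ Abc k * Abc l := by
  calc 1 / (π * Real.sqrt (((k : ℝ) + 1 / 3) * ((l : ℝ) + 1 / 3)))
      = (1 / Real.sqrt (π * (k + 1 / 3))) * (1 / Real.sqrt (π * (l + 1 / 3))) := by
        rw [div_mul_div_comm, one_mul, sqrt_pi_mul _ _ (by positivity) (by positivity)]
    _ ≤ Abc k * Abc l :=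
        mul_le_mul (le_Abc k) (le_Abc l) (by positivity) (Abc_pos k).le

lemma core_ineq (s x n : ℝ) (hn : 2 ≤ n) (hs : 0 < s) (hs4 : s ≤ 1 / 4)
    (hx : s * n ^ 2 ≤ x) :
    1 / Real.sqrt x - 1 / Real.sqrt (x + (3 * n + 1) / 9) ≤
      1 / (6 * n ^ 2 * (s * Real.sqrt s)) := by
  have hn0 : 0 < n := by linarith
  have hx0 : 0 < x := lt_of_lt_of_le (mul_pos hs (pow_pos hn0 2)) hx
  have hΔ : (0 : ℝ) < (3 * n + 1) / 9 := by linarith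
  set Δ : ℝ := (3 * n + 1) / 9 with hΔdef
  set a := Real.sqrt x with hadef
  set b := Real.sqrt (x + Δ) with hbdef
  have ha : 0 < a := Real.sqrt_pos.mpr hx0
  have hb : 0 < b := Real.sqrt_pos.mpr (by linarith)
  have ha2 : a ^ 2 = x := Real.sq_sqrt hx0.le
  have hb2 : b ^ 2 = x + Δ := Real.sq_sqrt (by linarith)
  have hab : a ≤ b := Real.sqrt_le_sqrt (by linarith)
  have hss : 0 < Real.sqrt s := Real.sqrt_pos.mpr hs
  have hsa : Real.sqrt s * n ≤ a := by
    have : Real.sqrt (s * n ^ 2) ≤ a := Real.sqrt_le_sqrt hx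
    rwa [Real.sqrt_mul hs.le, Real.sqrt_sq (by linarith)] at this
  have hdiff : 1 / a - 1 / b = Δ / (a * b * (a + b)) := by
    rw [div_sub_div _ _ ha.ne' hb.ne']
    rw [div_eq_div_iff (by positivity) (by positivity)]
    linear_combination a * b * hb2 - a * b * ha2
  have hden1 : Real.sqrt s * n * (2 * (s * n ^ 2) + Δ) ≤ a * b * (a + b) := by
    have h1 : Real.sqrt s * n * (2 * (s * n ^ 2) + Δ) ≤ a * (2 * x + Δ) := by
      apply mul_le_mul hsa (by linarith) (by positivity) ha.le
    have h2 : a * (2 * x + Δ) ≤ a * b * (a + b) := by nlinarith [ha2, hb2, ha, hab]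
    linarith
  have hkey : 6 * n * s * Δ ≤ 2 * s * n ^ 2 + Δ := by
    rw [hΔdef]; nlinarith
  rw [hdiff]
  calc Δ / (a * b * (a + b)) ≤ Δ / (Real.sqrt s * n * (2 * (s * n ^ 2) + Δ)) := by
        apply div_le_div_of_nonneg_left hΔ.le (by positivity) hden1
    _ ≤ 1 / (6 * n ^ 2 * (s * Real.sqrt s)) := by
        rw [div_le_div_iff₀ (by positivity) (by positivity)]
        nlinarith [mul_nonneg (mul_nonneg hss.le (by linarith : (0:ℝ) ≤ n))
          (sub_nonneg.mpr hkey)]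



/-- For `0 < δ ≤ 1/2` and `0 < k < n` with `δ ≤ k/n ≤ 1 - δ`,
`|p_{2k,2n} - d_{k,n}| ≤ 1/(6πn²(δ(1-δ))^{3/2})`. -/
theorem abs_p_sub_d_le_of_delta (δ : ℝ) (hδ0 : 0 < δ) (hδ : δ ≤ 1 / 2)
    (n k : ℕ) (hk : 0 < k) (hkn : k < n)
    (hlow : δ ≤ (k : ℝ) / n) (hhigh : (k : ℝ) / n ≤ 1 - δ) :
    |(Nat.choose (2 * k) k : ℝ) * (Nat.choose (2 * (n - k)) (n - k) : ℝ) / 2 ^ (2 * n) -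
        1 / (Real.pi * Real.sqrt ((k * (n - k) : ℕ) : ℝ))| ≤
      1 / (6 * Real.pi * (n : ℝ) ^ 2 * (δ * (1 - δ)) ^ ((3 : ℝ) / 2)) := by

  set l := n - k with hl
  have hkl : k + l = n := by omega
  have hl1 : 1 ≤ l := by omega
  have hn0 : (0:ℝ) < n := by exact_mod_cast Nat.pos_of_ne_zero (by omega)
  have hn2 : (2:ℝ) ≤ n := by exact_mod_cast (by omega : 2 ≤ n)
  have hk0 : (0:ℝ) < k := by exact_mod_cast hk
  have hl0 : (0:ℝ) < l := by exact_mod_cast hl1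
  have hklr : (k:ℝ) + l = n := by exact_mod_cast hkl
  have hδn : δ * n ≤ k := (le_div_iff₀ hn0).mp hlow
  have hkδ : (k:ℝ) ≤ (1 - δ) * n := by
    have := (div_le_iff₀ hn0).mp hhigh; linarith
  set s := δ * (1 - δ) with hs
  have hs0 : 0 < s := mul_pos hδ0 (by linarith)
  have hs4 : s ≤ 1 / 4 := by nlinarith [sq_nonneg (2 * δ - 1)]
  set x := (k:ℝ) * l with hx
  have hxpos : 0 < x := mul_pos hk0 hl0
  have hxlow : s * (n:ℝ) ^ 2 ≤ x := by
    nlinarith [mul_nonneg (sub_nonneg.mpr hδn) (sub_nonneg.mpr hkδ)]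
  have h2n : ((2:ℝ)) ^ (2 * n) = 4 ^ k * 4 ^ l := by
    rw [pow_mul, ← hkl, pow_add]; norm_num
  have hp : (Nat.choose (2 * k) k : ℝ) * (Nat.choose (2 * l) l : ℝ) / 2 ^ (2 * n)
      = Abc k * Abc l := by
    unfold Abc; rw [h2n, div_mul_div_comm]
  have hd : ((k * l : ℕ) : ℝ) = x := by push_cast; rw [hx]
  rw [hp, hd]
  have hy : ((k:ℝ) + 1 / 3) * ((l:ℝ) + 1 / 3) = x + (3 * n + 1) / 9 := by
    rw [hx]; linear_combination (1 / 3 : ℝ) * hklr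
  have hub := prod_upper k l
  have hlb := prod_lower k l
  have hxy4 : x ≤ ((k:ℝ) + 1 / 4) * ((l:ℝ) + 1 / 4) := by rw [hx]; nlinarith
  have hple : Abc k * Abc l ≤ 1 / (π * Real.sqrt x) := by
    refine hub.trans ?_
    apply one_div_le_one_div_of_le (by positivity)
    exact mul_le_mul_of_nonneg_left (Real.sqrt_le_sqrt hxy4) Real.pi_pos.le
  rw [abs_sub_comm, abs_of_nonneg (by linarith)]
  have hcore := core_ineq s x n hn2 hs0 hs4 hxlow
  have hs32 : (δ * (1 - δ)) ^ ((3:ℝ) / 2) = s * Real.sqrt s := by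
    rw [← hs, show (3:ℝ) / 2 = 1 + 1 / 2 by norm_num, Real.rpow_add hs0, Real.rpow_one,
      ← Real.sqrt_eq_rpow]
  have hxΔ : (0:ℝ) < x + (3 * n + 1) / 9 := by linarith
  calc 1 / (π * Real.sqrt x) - Abc k * Abc l
      ≤ 1 / (π * Real.sqrt x) - 1 / (π * Real.sqrt (x + (3 * n + 1) / 9)) := by
        rw [← hy]; linarith [hlb]
    _ = (1 / π) * (1 / Real.sqrt x - 1 / Real.sqrt (x + (3 * n + 1) / 9)) := by
        rw [mul_sub, one_div_mul_one_div, one_div_mul_one_div]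
    _ ≤ (1 / π) * (1 / (6 * (n:ℝ) ^ 2 * (s * Real.sqrt s))) :=
        mul_le_mul_of_nonneg_left hcore (by positivity)
    _ = 1 / (6 * π * (n:ℝ) ^ 2 * (δ * (1 - δ)) ^ ((3:ℝ) / 2)) := by
        rw [hs32, one_div_mul_one_div]; ring_nf
end

section
/- For every real δ with 0 < δ ≤ 1/2, all reals a, b with δ ≤ a < b ≤ 1 − δ, and every integer n ≥ 1, the sum over those integers k with a·n ≤ k ≤ b·n satisfies |Σ_{a ≤ k/n ≤ b} p_{2k,2n} − Σ_{a ≤ k/n ≤ b} d_{k,n}| ≤ 1/(3·π·n·(δ(1−δ))^{3/2}). -/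
open Real
open scoped Nat

private lemma cb_sq_mul_W (m : ℕ) :
    ((m.centralBinom : ℝ)/4^m)^2 * (Real.Wallis.W m * (2*m+1)) = 1 := by
  have hcb : (m.centralBinom : ℝ) * (m ! * m !) = (2*m)! := by
    have h := Nat.choose_mul_factorial_mul_factorial (Nat.le_mul_of_pos_left m two_pos)
    rw [show 2*m - m = m by omega] at h
    have h2 := congrArg (Nat.cast : ℕ → ℝ) h
    push_cast at h2
    rw [Nat.centralBinom]
    linear_combination h2
  rw [Real.Wallis.W_eq_factorial_ratio]
  have h1 : (m ! : ℝ) ≠ 0 := by positivity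
  have h2 : ((2*m)! : ℝ) ≠ 0 := by positivity
  have h3 : (2:ℝ)*m+1 ≠ 0 := by positivity
  have h4 : (4:ℝ)^m ≠ 0 := by positivity
  field_simp
  rw [show (2:ℝ)^(4*m) = (4^m)^2 by
    rw [← pow_mul, show (4:ℝ) = 2^2 by norm_num, ← pow_mul]; ring_nf]
  linear_combination ((4:ℝ)^m)^2 *
    ((m.centralBinom:ℝ)*(m ! * m !) + ((2*m)! : ℝ)) * hcb

private lemma cb_sq_le (m : ℕ) (hm : 1 ≤ m) :
    ((m.centralBinom : ℝ)/4^m)^2 ≤ 1/(π * m) := by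
  have key := cb_sq_mul_W m
  have hW := Real.Wallis.le_W m
  have hWpos := Real.Wallis.W_pos m
  have hm' : (1:ℝ) ≤ m := by exact_mod_cast hm
  have hd : 0 < Real.Wallis.W m * (2*m+1) := by positivity
  have hc : ((m.centralBinom : ℝ)/4^m)^2 = 1/(Real.Wallis.W m * (2*m+1)) :=
    eq_one_div_of_mul_eq_one_left key
  rw [hc]
  apply one_div_le_one_div_of_le (by positivity)
  have h1 : (2*(m:ℝ)+1)/(2*m+2)*(π/2) * (2*m+1) ≤ Real.Wallis.W m * (2*m+1) := by
    apply mul_le_mul_of_nonneg_right hW (by positivity)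
  have h2 : π * m ≤ (2*(m:ℝ)+1)/(2*m+2)*(π/2) * (2*m+1) := by
    rw [div_mul_eq_mul_div, div_mul_eq_mul_div, le_div_iff₀ (by positivity)]
    nlinarith [Real.pi_pos]
  linarith

private lemma le_cb_sq (m : ℕ) :
    2/(π * (2*m+1)) ≤ ((m.centralBinom : ℝ)/4^m)^2 := by
  have key := cb_sq_mul_W m
  have hW := Real.Wallis.W_le m
  have hWpos := Real.Wallis.W_pos m
  have hc : ((m.centralBinom : ℝ)/4^m)^2 = 1/(Real.Wallis.W m * (2*m+1)) :=
    eq_one_div_of_mul_eq_one_left key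
  rw [hc, div_le_div_iff₀ (by positivity) (by positivity)]
  nlinarith [Real.pi_pos]

private lemma point_bound (k m : ℕ) (hk : 1 ≤ k) (hm : 1 ≤ m) :
    0 ≤ 1/(π*Real.sqrt ((k:ℝ)*m)) - (k.centralBinom : ℝ)/4^k * ((m.centralBinom : ℝ)/4^m) ∧
    1/(π*Real.sqrt ((k:ℝ)*m)) - (k.centralBinom : ℝ)/4^k * ((m.centralBinom : ℝ)/4^m) ≤
      (2*((k:ℝ)+m)+1)/(8*π*(((k:ℝ)*m)*Real.sqrt ((k:ℝ)*m))) := by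
  have hπ := Real.pi_pos
  have hk' : (1:ℝ) ≤ k := by exact_mod_cast hk
  have hm' : (1:ℝ) ≤ m := by exact_mod_cast hm
  set x : ℝ := (k:ℝ)*m with hxdef
  set y : ℝ := ((k:ℝ)+1/2)*((m:ℝ)+1/2) with hydef
  have hx : 0 < x := by positivity
  have hy : 0 < y := by positivity
  have hxy : x ≤ y := by nlinarith
  have hsx : 0 < Real.sqrt x := Real.sqrt_pos.mpr hx
  have hsy : 0 < Real.sqrt y := Real.sqrt_pos.mpr hy
  have hsxy : Real.sqrt x ≤ Real.sqrt y := Real.sqrt_le_sqrt hxy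
  have hxx : Real.sqrt x * Real.sqrt x = x := Real.mul_self_sqrt hx.le
  have hyy : Real.sqrt y * Real.sqrt y = y := Real.mul_self_sqrt hy.le
  set p : ℝ := (k.centralBinom : ℝ)/4^k * ((m.centralBinom : ℝ)/4^m) with hpdef
  have hp0 : 0 ≤ p := by positivity
  -- upper bound on p
  have hup : p ≤ 1/(π*Real.sqrt x) := by
    have h1 : p^2 ≤ (1/(π*Real.sqrt x))^2 := by
      have a1 := cb_sq_le k hk
      have a2 := cb_sq_le m hm
      have b1 : (0:ℝ) ≤ ((k.centralBinom : ℝ)/4^k)^2 := by positivity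
      have b2 : (0:ℝ) ≤ ((m.centralBinom : ℝ)/4^m)^2 := by positivity
      have : p^2 = ((k.centralBinom : ℝ)/4^k)^2 * ((m.centralBinom : ℝ)/4^m)^2 := by ring
      rw [this]
      calc ((k.centralBinom : ℝ)/4^k)^2 * ((m.centralBinom : ℝ)/4^m)^2
          ≤ (1/(π*k)) * (1/(π*m)) := by
            apply mul_le_mul a1 a2 b2 (by positivity)
        _ = (1/(π*Real.sqrt x))^2 := by
            rw [div_pow, mul_pow, one_pow, Real.sq_sqrt hx.le]
            rw [hxdef]; field_simp
    exact (pow_le_pow_iff_left₀ hp0 (by positivity) two_ne_zero).mp h1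
  -- lower bound on p
  have hlo : 1/(π*Real.sqrt y) ≤ p := by
    have h1 : (1/(π*Real.sqrt y))^2 ≤ p^2 := by
      have a1 := le_cb_sq k
      have a2 := le_cb_sq m
      have b1 : (0:ℝ) ≤ 2/(π*(2*(m:ℕ)+1)) := by positivity
      have : p^2 = ((k.centralBinom : ℝ)/4^k)^2 * ((m.centralBinom : ℝ)/4^m)^2 := by ring
      rw [this]
      calc (1/(π*Real.sqrt y))^2 = (2/(π*(2*k+1))) * (2/(π*(2*m+1))) := by
            rw [div_pow, mul_pow, one_pow, Real.sq_sqrt hy.le]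
            rw [hydef]; field_simp
        _ ≤ ((k.centralBinom : ℝ)/4^k)^2 * ((m.centralBinom : ℝ)/4^m)^2 := by
            apply mul_le_mul a1 a2 b1 (by positivity)
    exact (pow_le_pow_iff_left₀ (by positivity) hp0 two_ne_zero).mp h1
  constructor
  · linarith
  · have hE : 1/Real.sqrt x - 1/Real.sqrt y ≤ (y - x)/(2*(x*Real.sqrt x)) := by
      have key : (Real.sqrt y - Real.sqrt x) * (Real.sqrt y + Real.sqrt x) = y - x := by
        nlinarith
      have h2 : Real.sqrt y - Real.sqrt x ≤ (y - x)/(2*Real.sqrt x) := by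
        rw [le_div_iff₀ (by positivity), ← key]
        nlinarith
      have h1 : 1/Real.sqrt x - 1/Real.sqrt y = (Real.sqrt y - Real.sqrt x)/(Real.sqrt x*Real.sqrt y) := by
        field_simp
      rw [h1]
      calc (Real.sqrt y - Real.sqrt x)/(Real.sqrt x*Real.sqrt y)
          ≤ ((y-x)/(2*Real.sqrt x))/(Real.sqrt x*Real.sqrt x) := by
            apply div_le_div₀ (div_nonneg (by linarith) (by positivity)) h2 (by positivity)
            exact mul_le_mul_of_nonneg_left hsxy hsx.le
        _ = (y - x)/(2*(x*Real.sqrt x)) := by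
            rw [hxx, div_div]; ring_nf
    calc 1/(π*Real.sqrt x) - p ≤ 1/(π*Real.sqrt x) - 1/(π*Real.sqrt y) := by linarith
      _ = (1/π) * (1/Real.sqrt x - 1/Real.sqrt y) := by ring
      _ ≤ (1/π) * ((y - x)/(2*(x*Real.sqrt x))) := by
          apply mul_le_mul_of_nonneg_left hE (by positivity)
      _ = (2*((k:ℝ)+m)+1)/(8*π*(x*Real.sqrt x)) := by
          rw [hydef, hxdef]
          have hxs : ((k:ℝ)*m)*Real.sqrt ((k:ℝ)*m) ≠ 0 := by positivity
          field_simp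
          ring

set_option maxHeartbeats 1600000 in
/-- For `0 < δ ≤ 1/2`, reals `δ ≤ a < b ≤ 1 - δ` and an integer `n ≥ 1`,
`|Σ_{a ≤ k/n ≤ b} p_{2k,2n} - Σ_{a ≤ k/n ≤ b} d_{k,n}| ≤ 1/(3πn(δ(1-δ))^{3/2})`,
where the sums range over integers `k` with `a·n ≤ k ≤ b·n`. -/
theorem abs_sum_p_sub_sum_d_le (δ a b : ℝ) (hδ0 : 0 < δ) (hδ : δ ≤ 1 / 2)
    (ha : δ ≤ a) (hab : a < b) (hb : b ≤ 1 - δ) (n : ℕ) (hn : 1 ≤ n) :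
    |(∑ k ∈ Finset.Icc ⌈a * (n : ℝ)⌉₊ ⌊b * (n : ℝ)⌋₊,
        (Nat.choose (2 * k) k : ℝ) * (Nat.choose (2 * (n - k)) (n - k) : ℝ) / 2 ^ (2 * n)) -
      ∑ k ∈ Finset.Icc ⌈a * (n : ℝ)⌉₊ ⌊b * (n : ℝ)⌋₊,
        1 / (Real.pi * Real.sqrt ((k * (n - k) : ℕ) : ℝ))| ≤
      1 / (3 * Real.pi * n * (δ * (1 - δ)) ^ ((3 : ℝ) / 2)) := by
  have hπ := Real.pi_pos
  have hn0 : (0:ℝ) < n := by exact_mod_cast hn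
  have hn1 : (1:ℝ) ≤ n := by exact_mod_cast hn
  have hδ1 : δ < 1 := by linarith
  set t : ℝ := δ * (1 - δ) with htdef
  have ht : 0 < t := by apply mul_pos hδ0; linarith
  have hst : 0 < Real.sqrt t := Real.sqrt_pos.mpr ht
  have hrpow : t ^ ((3:ℝ)/2) = t * Real.sqrt t := by
    rw [show (3:ℝ)/2 = 1 + 1/2 by norm_num, Real.rpow_add ht, Real.rpow_one,
      ← Real.sqrt_eq_rpow]
  set K := ⌈a * (n : ℝ)⌉₊ with hKdef
  set L := ⌊b * (n : ℝ)⌋₊ with hLdef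
  set B : ℝ := (2*(n:ℝ)+1)/(8*π*(t * Real.sqrt t * n^3)) with hBdef
  set P : ℕ → ℝ := fun k =>
    (Nat.choose (2 * k) k : ℝ) * (Nat.choose (2 * (n - k)) (n - k) : ℝ) / 2 ^ (2 * n) with hPdef
  set D : ℕ → ℝ := fun k => 1 / (Real.pi * Real.sqrt ((k * (n - k) : ℕ) : ℝ)) with hDdef
  have hfacts : ∀ k ∈ Finset.Icc K L, 1 ≤ k ∧ k < n ∧ 0 ≤ D k - P k ∧ D k - P k ≤ B := by
    intro k hk
    rw [Finset.mem_Icc] at hk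
    have hka : a * n ≤ k := Nat.ceil_le.mp hk.1
    have hkb : (k:ℝ) ≤ b * n :=
      le_trans (by exact_mod_cast hk.2) (Nat.floor_le (by nlinarith))
    have hklo : δ * n ≤ k := le_trans (by nlinarith) hka
    have hkhi : (k:ℝ) ≤ (1-δ) * n := le_trans hkb (by nlinarith)
    have hk1 : 1 ≤ k := by
      by_contra h
      have : k = 0 := by omega
      rw [this] at hklo; push_cast at hklo; nlinarith
    have hkn : k < n := by
      have : (k:ℝ) < n := by nlinarith
      exact_mod_cast this
    refine ⟨hk1, hkn, ?_⟩
    have hm1 : 1 ≤ n - k := by omega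
    have hcast : ((n - k : ℕ) : ℝ) = (n:ℝ) - k := by
      rw [Nat.cast_sub hkn.le]
    have hkr : (1:ℝ) ≤ k := by exact_mod_cast hk1
    have hPD := point_bound k (n - k) hk1 hm1
    have hsum : ((n - k : ℕ) : ℝ) = (n:ℝ) - k := hcast
    have hDeq : D k = 1/(π*Real.sqrt ((k:ℝ)*((n - k : ℕ):ℝ))) := by
      simp only [hDdef]
      congr 2
      push_cast
      ring
    have hPeq : P k = (k.centralBinom : ℝ)/4^k * (((n-k).centralBinom : ℝ)/4^(n-k)) := by
      simp only [hPdef, Nat.centralBinom]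
      rw [show (2:ℝ)^(2*n) = 4^k * 4^(n-k) by
        rw [← pow_add, show k + (n-k) = n by omega, show (4:ℝ) = 2^2 by norm_num, ← pow_mul]]
      ring
    rw [hDeq, hPeq]
    constructor
    · exact hPD.1
    · refine le_trans hPD.2 ?_
      rw [hBdef]
      have hkk : (2*((k:ℝ)+((n - k : ℕ):ℝ))+1) = 2*(n:ℝ)+1 := by rw [hcast]; ring
      rw [hkk]
      set x : ℝ := (k:ℝ)*((n - k : ℕ):ℝ) with hxdef
      have hxlo : t * n^2 ≤ x := by
        rw [hxdef, hcast, htdef]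
        nlinarith [mul_nonneg (sub_nonneg.2 hklo) (sub_nonneg.2 hkhi)]
      have htn : 0 < t * n^2 := by positivity
      have hx : 0 < x := lt_of_lt_of_le htn hxlo
      apply div_le_div_of_nonneg_left (by positivity) (by positivity)
      have hsq : Real.sqrt (t * n^2) = Real.sqrt t * n := by
        rw [Real.sqrt_mul ht.le, Real.sqrt_sq hn0.le]
      have h1 : Real.sqrt t * n ≤ Real.sqrt x := by
        rw [← hsq]; exact Real.sqrt_le_sqrt hxlo
      have h2 : t * Real.sqrt t * n^3 ≤ x * Real.sqrt x := by
        calc t * Real.sqrt t * n^3 = (t * n^2) * (Real.sqrt t * n) := by ring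
          _ ≤ x * Real.sqrt x := by
              apply mul_le_mul hxlo h1 (by positivity) hx.le
      calc 8*π*(t * Real.sqrt t * n^3) ≤ 8*π*(x * Real.sqrt x) := by nlinarith
        _ = 8*π*(x * Real.sqrt x) := rfl
  have hB0 : 0 ≤ B := by positivity
  have hcard : (Finset.Icc K L).card ≤ n - 1 := by
    by_cases h : K ≤ L
    · have h1 := hfacts K (by simp [Finset.mem_Icc, h])
      have h2 := hfacts L (by simp [Finset.mem_Icc, h])
      rw [Nat.card_Icc]
      omega
    · rw [Nat.card_Icc]
      omega
  have habs : |(∑ k ∈ Finset.Icc K L, P k) - ∑ k ∈ Finset.Icc K L, D k|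
      = ∑ k ∈ Finset.Icc K L, (D k - P k) := by
    rw [abs_sub_comm, ← Finset.sum_sub_distrib,
      abs_of_nonneg (Finset.sum_nonneg fun k hk => (hfacts k hk).2.2.1)]
  rw [habs]
  calc ∑ k ∈ Finset.Icc K L, (D k - P k)
      ≤ (Finset.Icc K L).card • B :=
        Finset.sum_le_card_nsmul _ _ _ fun k hk => (hfacts k hk).2.2.2
    _ = ((Finset.Icc K L).card : ℝ) * B := nsmul_eq_mul _ _
    _ ≤ ((n:ℝ) - 1) * B := by
        apply mul_le_mul_of_nonneg_right _ hB0
        calc ((Finset.Icc K L).card : ℝ) ≤ ((n - 1 : ℕ) : ℝ) := by exact_mod_cast hcard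
          _ = (n:ℝ) - 1 := by rw [Nat.cast_sub hn]; norm_num
    _ ≤ 1 / (3 * π * n * t ^ ((3:ℝ)/2)) := by
        rw [hrpow, hBdef, ← mul_div_assoc, div_le_div_iff₀ (by positivity) (by positivity)]
        nlinarith [mul_nonneg (mul_nonneg (mul_nonneg (mul_nonneg hπ.le ht.le) hst.le) hn0.le)
          (show (0:ℝ) ≤ 2*(n:ℝ)^2+3*n+3 by positivity)]
end

section
/- For all integers n ≥ 1 and 0 ≤ k ≤ n, the distribution of the time spent above the x-axis by the simple symmetric random walk of length 2n is symmetric: P(L_{2n} = 2k) = P(L_{2n} = 2(n−k)). -/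
open MeasureTheory ProbabilityTheory Filter

namespace TAAS

noncomputable section
open Classical

/-- The walk at time `k` driven by coin values `c 1, c 2, ...`. -/
def wk (c : ℕ → ℝ) (k : ℕ) : ℝ := ∑ i ∈ Finset.range k, (2 * c (i + 1) - 1)

/-- Number of steps in `[1, N]` spent above the axis. -/
def cnt (c : ℕ → ℝ) (N : ℕ) : ℕ :=
  ∑ j ∈ Finset.Icc 1 N, if 0 < wk c j ∨ 0 < wk c (j - 1) then 1 else 0

lemma wk_zero (c : ℕ → ℝ) : wk c 0 = 0 := by simp [wk]

lemma wk_succ (c : ℕ → ℝ) (k : ℕ) : wk c (k + 1) = wk c k + (2 * c (k + 1) - 1) := by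
  rw [wk, wk, Finset.sum_range_succ]

lemma wk_int {c : ℕ → ℝ} (hc : ∀ j, c j = 0 ∨ c j = 1) (k : ℕ) :
    ∃ a : ℤ, wk c k = (a : ℝ) := by
  induction k with
  | zero => exact ⟨0, by simp [wk_zero]⟩
  | succ m ih =>
    obtain ⟨a, ha⟩ := ih
    rcases hc (m + 1) with h | h
    · exact ⟨a - 1, by rw [wk_succ, ha, h]; push_cast; ring⟩
    · exact ⟨a + 1, by rw [wk_succ, ha, h]; push_cast; ring⟩

lemma wk_neg (c : ℕ → ℝ) (k : ℕ) : wk (fun j => 1 - c j) k = - wk c k := by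
  simp only [wk, ← Finset.sum_neg_distrib]
  exact Finset.sum_congr rfl fun i _ => by ring

lemma wk_congr {c c' : ℕ → ℝ} {N : ℕ} (h : ∀ j ∈ Finset.Icc 1 N, c j = c' j)
    (k : ℕ) (hk : k ≤ N) : wk c k = wk c' k := by
  refine Finset.sum_congr rfl fun i hi => ?_
  rw [h (i + 1) (Finset.mem_Icc.2 ⟨Nat.le_add_left 1 i,
    Nat.succ_le_of_lt (lt_of_lt_of_le (Finset.mem_range.1 hi) hk)⟩)]

lemma cnt_congr {c c' : ℕ → ℝ} {N : ℕ} (h : ∀ j ∈ Finset.Icc 1 N, c j = c' j) :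
    cnt c N = cnt c' N := by
  refine Finset.sum_congr rfl fun j hj => ?_
  have hj' := Finset.mem_Icc.1 hj
  rw [wk_congr h j hj'.2, wk_congr h (j - 1) (le_trans (Nat.sub_le j 1) hj'.2)]

lemma cnt_flip {c : ℕ → ℝ} (hc : ∀ j, c j = 0 ∨ c j = 1) (N : ℕ) :
    cnt (fun j => 1 - c j) N + cnt c N = N := by
  have : ∀ j ∈ Finset.Icc 1 N,
      ((if 0 < wk (fun j => 1 - c j) j ∨ 0 < wk (fun j => 1 - c j) (j - 1) then 1 else 0)
        + (if 0 < wk c j ∨ 0 < wk c (j - 1) then 1 else 0) : ℕ) = 1 := by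
    intro j hj
    obtain ⟨hj1, _⟩ := Finset.mem_Icc.1 hj
    obtain ⟨m, rfl⟩ := Nat.exists_eq_add_of_le hj1
    obtain ⟨a, ha⟩ := wk_int hc (1 + m)
    obtain ⟨b, hb⟩ := wk_int hc (1 + m - 1)
    have hstep : a = b + 1 ∨ a = b - 1 := by
      have h1 : (1 + m : ℕ) = (1 + m - 1) + 1 := by omega
      have h2 : wk c (1 + m) = wk c (1 + m - 1) + (2 * c (1 + m - 1 + 1) - 1) := by
        rw [h1]; exact wk_succ c (1 + m - 1)
      rcases hc (1 + m - 1 + 1) with h | h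
      · right
        have : (a : ℝ) = b - 1 := by rw [← ha, ← hb, h2, h]; ring
        exact_mod_cast this
      · left
        have : (a : ℝ) = b + 1 := by rw [← ha, ← hb, h2, h]; ring
        exact_mod_cast this
    rw [wk_neg, wk_neg, ha, hb]
    have e1 : (0 < -(a : ℝ) ∨ 0 < -(b : ℝ)) ↔ (a < 0 ∨ b < 0) := by
      constructor <;> intro h <;> rcases h with h | h
      · left; exact_mod_cast neg_pos.1 h
      · right; exact_mod_cast neg_pos.1 h
      · left; exact neg_pos.2 (by exact_mod_cast h)
      · right; exact neg_pos.2 (by exact_mod_cast h)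
    have e2 : (0 < (a : ℝ) ∨ 0 < (b : ℝ)) ↔ (0 < a ∨ 0 < b) := by
      constructor <;> intro h <;> rcases h with h | h
      · left; exact_mod_cast h
      · right; exact_mod_cast h
      · left; exact_mod_cast h
      · right; exact_mod_cast h
    rw [if_congr e1 rfl rfl, if_congr e2 rfl rfl]
    split_ifs with h1 h2 h2 <;> omega
  calc cnt (fun j => 1 - c j) N + cnt c N
      = ∑ j ∈ Finset.Icc 1 N,
        ((if 0 < wk (fun j => 1 - c j) j ∨ 0 < wk (fun j => 1 - c j) (j - 1) then 1 else 0)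
          + (if 0 < wk c j ∨ 0 < wk c (j - 1) then 1 else 0)) := by
        rw [cnt, cnt, ← Finset.sum_add_distrib]
    _ = ∑ j ∈ Finset.Icc 1 N, 1 := Finset.sum_congr rfl this
    _ = N := by simp

/-- boolean to real. -/
def bv (t : Bool) : ℝ := if t then 1 else 0

lemma bv01 (t : Bool) : bv t = 0 ∨ bv t = 1 := by cases t <;> simp [bv]

lemma bv_inj : Function.Injective bv := by
  intro s t h
  cases s <;> cases t <;> simp_all [bv]

/-- Extend a pattern of `N` coin flips to a coin-value function on `ℕ` (index shifted by 1). -/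
def extb {N : ℕ} (b : Fin N → Bool) (j : ℕ) : ℝ :=
  if h : j - 1 < N then bv (b ⟨j - 1, h⟩) else 0

lemma extb01 {N : ℕ} (b : Fin N → Bool) (j : ℕ) : extb b j = 0 ∨ extb b j = 1 := by
  unfold extb; split
  · exact bv01 _
  · left; rfl

end
end TAAS
/-- The distribution of the time spent above the axis by the simple symmetric random walk of
length `2n` is symmetric: `P(L_{2n} = 2k) = P(L_{2n} = 2(n-k))` for `0 ≤ k ≤ n`. -/
theorem time_above_axis_symmetric
    (Ω : Type*) [MeasurableSpace Ω] (μ : Measure Ω) [IsProbabilityMeasure μ]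
    (B : ℕ → Ω → ℝ) (hBmeas : ∀ i, Measurable (B i))
    (hBindep : iIndepFun B μ)
    (hB01 : ∀ i ω, B i ω = 0 ∨ B i ω = 1)
    (hB1 : ∀ i, μ {ω | B i ω = 1} = 1 / 2)
    (hB0 : ∀ i, μ {ω | B i ω = 0} = 1 / 2)
    (S : ℕ → Ω → ℝ)
    (hS : ∀ k ω, S k ω = ∑ i ∈ Finset.range k, (2 * B (i + 1) ω - 1))
    (L : ℕ → Ω → ℕ)
    (hL : ∀ n ω, L n ω =
      ∑ k ∈ Finset.Icc 1 n, if 0 < S k ω ∨ 0 < S (k - 1) ω then 1 else 0)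
    (n k : ℕ) (hn : 1 ≤ n) (hk : k ≤ n) :
    μ {ω | L (2 * n) ω = 2 * k} = μ {ω | L (2 * n) ω = 2 * (n - k)} := by
  classical
  set N := 2 * n with hN
  -- `L N ω` equals the abstract count of the coin values of `ω`
  have hLcnt : ∀ ω, L N ω = TAAS.cnt (fun j => B j ω) N := by
    intro ω
    rw [hL]
    refine Finset.sum_congr rfl fun j _ => ?_
    refine if_congr (or_congr ?_ ?_) rfl rfl
    · rw [hS]; rfl
    · rw [hS]; rfl
  -- events
  set E : (Fin N → Bool) → Set Ω :=
    fun b => ⋂ j ∈ Finset.Icc 1 N, {ω | B j ω = TAAS.extb b j} with hE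
  have hEmeas : ∀ b, MeasurableSet (E b) := by
    intro b
    refine Finset.measurableSet_biInter _ fun j _ => ?_
    exact (hBmeas j) (measurableSet_singleton _)
  have hEcnt : ∀ b ω, ω ∈ E b → L N ω = TAAS.cnt (TAAS.extb b) N := by
    intro b ω hω
    rw [hLcnt ω]
    refine TAAS.cnt_congr fun j hj => ?_
    exact Set.mem_iInter₂.1 hω j hj
  have hEmem : ∀ ω, ∃ b : Fin N → Bool, ω ∈ E b := by
    intro ω
    refine ⟨fun i => decide (B (i + 1) ω = 1), ?_⟩
    refine Set.mem_iInter₂.2 fun j hj => ?_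
    obtain ⟨hj1, hj2⟩ := Finset.mem_Icc.1 hj
    have hjN : j - 1 < N := by omega
    have hj1' : j - 1 + 1 = j := by omega
    show B j ω = TAAS.extb _ j
    rw [TAAS.extb, dif_pos hjN]
    rcases hB01 j ω with h | h
    · rw [h]
      have : ¬ (B (j - 1 + 1) ω = 1) := by rw [hj1', h]; norm_num
      simp [TAAS.bv, this]
    · rw [h]
      have : B (j - 1 + 1) ω = 1 := by rw [hj1', h]
      simp [TAAS.bv, this]
  have hEdisj : ∀ b b' : Fin N → Bool, b ≠ b' → Disjoint (E b) (E b') := by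
    intro b b' hne
    rw [Set.disjoint_left]
    intro ω hω hω'
    apply hne
    funext i
    have hi : (i : ℕ) + 1 ∈ Finset.Icc 1 N := Finset.mem_Icc.2 ⟨by omega, by omega⟩
    have h1 := Set.mem_iInter₂.1 hω _ hi
    have h2 := Set.mem_iInter₂.1 hω' _ hi
    have : TAAS.extb b ((i : ℕ) + 1) = TAAS.extb b' ((i : ℕ) + 1) := by
      rw [← h1, ← h2]
    have hiN : (i : ℕ) + 1 - 1 < N := by omega
    rw [TAAS.extb, TAAS.extb, dif_pos hiN, dif_pos hiN] at this
    have := TAAS.bv_inj this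
    simpa using this
  -- probability of each atom
  have hEprob : ∀ b : Fin N → Bool, μ (E b) = (1 / 2) ^ N := by
    intro b
    have h1 : E b = ⋂ j ∈ Finset.Icc 1 N, B j ⁻¹' {TAAS.extb b j} := rfl
    have h2 := hBindep.measure_inter_preimage_eq_mul (Finset.Icc 1 N)
      (sets := fun j => {TAAS.extb b j}) (fun j _ => measurableSet_singleton _)
    rw [h1, h2]
    have h3 : ∀ j ∈ Finset.Icc 1 N, μ (B j ⁻¹' {TAAS.extb b j}) = 1 / 2 := by
      intro j _
      rcases TAAS.extb01 b j with h | h <;> rw [h]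
      · have : B j ⁻¹' {(0 : ℝ)} = {ω | B j ω = 0} := rfl
        rw [this, hB0]
      · have : B j ⁻¹' {(1 : ℝ)} = {ω | B j ω = 1} := rfl
        rw [this, hB1]
    rw [Finset.prod_congr rfl h3, Finset.prod_const, Nat.card_Icc]
    norm_num
  -- the measure of a level set
  have hlevel : ∀ m : ℕ, μ {ω | L N ω = m} =
      (Finset.univ.filter (fun b : Fin N → Bool => TAAS.cnt (TAAS.extb b) N = m)).card
        * (1 / 2) ^ N := by
    intro m
    have hset : {ω | L N ω = m} =
        ⋃ b ∈ Finset.univ.filter (fun b : Fin N → Bool => TAAS.cnt (TAAS.extb b) N = m),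
          E b := by
      ext ω
      simp only [Set.mem_setOf_eq, Set.mem_iUnion, Finset.mem_filter, Finset.mem_univ,
        true_and, exists_prop]
      constructor
      · intro hω
        obtain ⟨b, hb⟩ := hEmem ω
        exact ⟨b, by rw [← hEcnt b ω hb, hω], hb⟩
      · rintro ⟨b, hbm, hb⟩
        rw [hEcnt b ω hb, hbm]
    rw [hset, measure_biUnion_finset ?_ (fun b _ => hEmeas b)]
    · rw [Finset.sum_congr rfl (fun b _ => hEprob b), Finset.sum_const, nsmul_eq_mul]
    · intro b _ b' _ hne
      exact hEdisj b b' hne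
  -- flipping the coins
  have hflip : ∀ b : Fin N → Bool,
      TAAS.cnt (TAAS.extb (fun i => ! b i)) N + TAAS.cnt (TAAS.extb b) N = N := by
    intro b
    have h1 := TAAS.cnt_flip (c := TAAS.extb b) (TAAS.extb01 b) N
    have h2 : TAAS.cnt (TAAS.extb (fun i => ! b i)) N
        = TAAS.cnt (fun j => 1 - TAAS.extb b j) N := by
      refine TAAS.cnt_congr fun j hj => ?_
      obtain ⟨hj1, hj2⟩ := Finset.mem_Icc.1 hj
      have hjN : j - 1 < N := by omega
      rw [TAAS.extb, TAAS.extb, dif_pos hjN, dif_pos hjN]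
      cases b ⟨j - 1, hjN⟩ <;> simp [TAAS.bv]
    rw [h2, h1]
  -- cardinalities match via the involution `b ↦ !b`
  have hcard :
      (Finset.univ.filter (fun b : Fin N → Bool => TAAS.cnt (TAAS.extb b) N = 2 * k)).card =
      (Finset.univ.filter
        (fun b : Fin N → Bool => TAAS.cnt (TAAS.extb b) N = 2 * (n - k))).card := by
    refine Finset.card_bij' (fun b _ => fun i => ! b i) (fun b _ => fun i => ! b i)
      ?_ ?_ ?_ ?_
    · intro b hb
      rw [Finset.mem_filter] at hb ⊢
      refine ⟨Finset.mem_univ _, ?_⟩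
      have := hflip b
      beta_reduce
      omega
    · intro b hb
      rw [Finset.mem_filter] at hb ⊢
      refine ⟨Finset.mem_univ _, ?_⟩
      have := hflip b
      beta_reduce
      omega
    · intro b _; funext i; simp
    · intro b _; funext i; simp
  rw [hlevel (2 * k), hlevel (2 * (n - k)), hcard]
end

section
/- (Lemma 1, total-variation concentration of the empirical measure.) Let Y_1, ..., Y_m be i.i.d. random variables taking values in a finite set A of cardinality s+1, with common distribution μ, and let ν_m be the empirical measure ν_m({a}) = |{j ≤ m : Y_j = a}|/m. Then for every real ε with ε ≥ √(20·(s+1)/m), P(Σ_{a ∈ A} |μ({a}) − ν_m({a})| > ε) ≤ 3·exp(−m·ε²/25). -/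
open MeasureTheory ProbabilityTheory

set_option maxHeartbeats 1600000

/-- exp u ≤ 1 + u + u² for |u| ≤ 1. -/
lemma exp_le_one_add_add_sq {u : ℝ} (hu : |u| ≤ 1) : Real.exp u ≤ 1 + u + u ^ 2 := by
  have h := Real.exp_bound hu (n := 2) (by norm_num)
  have h2 : |Real.exp u - (1 + u)| ≤ |u| ^ 2 * (3 / 4) := by
    convert h using 2
    · simp [Finset.sum_range_succ]
    · norm_num
  have h3 : Real.exp u - (1 + u) ≤ |u| ^ 2 * (3 / 4) := (abs_le.mp h2).2
  have h4 : |u| ^ 2 = u ^ 2 := sq_abs u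
  nlinarith [sq_nonneg u]

/-- Total-variation concentration of the empirical measure: for i.i.d. random variables
`Y₁,…,Y_m` with values in a finite set `A` of cardinality `s+1` and common distribution `μ`,
and for every `ε ≥ √(20(s+1)/m)`,
`P(Σ_{a ∈ A} |μ({a}) - ν_m({a})| > ε) ≤ 3·exp(-mε²/25)`, where
`ν_m({a}) = |{j : Y_j = a}|/m` is the empirical measure. -/
theorem empirical_tv_concentration
    (A : Type*) [Fintype A] [DecidableEq A] [MeasurableSpace A]
    [MeasurableSingletonClass A]
    (s m : ℕ) (hcard : Fintype.card A = s + 1) (hm : 0 < m)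
    (Ω : Type*) [MeasurableSpace Ω] (P : Measure Ω) [IsProbabilityMeasure P]
    (Y : Fin m → Ω → A) (hYmeas : ∀ j, Measurable (Y j))
    (hYindep : iIndepFun Y P)
    (μ : Measure A) [IsProbabilityMeasure μ]
    (hYdist : ∀ j, Measure.map (Y j) P = μ)
    (ε : ℝ) (hε : Real.sqrt (20 * (s + 1) / m) ≤ ε) :
    (P {ω | ε < ∑ a : A,
        |(μ {a}).toReal -
          ((Finset.univ.filter (fun j : Fin m => Y j ω = a)).card : ℝ) / m|}).toReal ≤
      3 * Real.exp (-(m : ℝ) * ε ^ 2 / 25) := by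
  classical
  set pa : A → ℝ := fun a => (μ {a}).toReal with hpa_def
  have hm' : (0:ℝ) < m := by exact_mod_cast hm
  -- basic facts about ε
  have hε0 : 0 < ε := by
    refine lt_of_lt_of_le ?_ hε
    apply Real.sqrt_pos.mpr
    positivity
  have hmε : 20 * ((s:ℝ) + 1) ≤ (m:ℝ) * ε ^ 2 := by
    have h1 : 20 * ((s:ℝ) + 1) / m ≤ ε ^ 2 := by
      have := Real.sqrt_le_sqrt (le_of_eq (rfl : 20 * ((s:ℝ)+1) / m = 20 * ((s:ℝ)+1)/m))
      calc 20 * ((s:ℝ) + 1) / m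
          = Real.sqrt (20 * ((s:ℝ) + 1) / m) ^ 2 := by
            rw [Real.sq_sqrt]; positivity
        _ ≤ ε ^ 2 := by
            apply pow_le_pow_left₀ (Real.sqrt_nonneg _) hε
    calc 20 * ((s:ℝ) + 1) = (20 * ((s:ℝ) + 1) / m) * m := by field_simp
      _ ≤ ε ^ 2 * m := by apply mul_le_mul_of_nonneg_right h1 hm'.le
      _ = (m:ℝ) * ε ^ 2 := by ring
  -- sum of pa is 1
  have hpa_nonneg : ∀ a, 0 ≤ pa a := fun a => ENNReal.toReal_nonneg
  have hpa_sum : ∑ a : A, pa a = 1 := by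
    have h := integral_fintype (μ := μ) (f := fun _ => (1:ℝ)) (integrable_const 1)
    simpa [smul_eq_mul, Measure.real, hpa_def] using h.symm
  -- empirical counts: q ω a
  set q : Ω → A → ℝ := fun ω a =>
    ((Finset.univ.filter (fun j : Fin m => Y j ω = a)).card : ℝ) / m with hq_def
  have hq_nonneg : ∀ ω a, 0 ≤ q ω a := by intro ω a; positivity
  have hq_sum : ∀ ω, ∑ a : A, q ω a = 1 := by
    intro ω
    have : ∑ a : A, ((Finset.univ.filter (fun j : Fin m => Y j ω = a)).card : ℝ) = m := by
      push_cast [Finset.card_filter]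
      rw [Finset.sum_comm]
      simp [Finset.sum_ite_eq]
    rw [hq_def]
    simp only []
    rw [← Finset.sum_div, this, div_self hm'.ne']
  -- trivial case ε ≥ 2
  rcases le_or_gt 2 ε with hε2 | hε2
  · have hempty : {ω | ε < ∑ a : A, |pa a - q ω a|} = ∅ := by
      ext ω
      simp only [Set.mem_setOf_eq, Set.mem_empty_iff_false, iff_false, not_lt]
      calc ∑ a : A, |pa a - q ω a| ≤ ∑ a : A, (pa a + q ω a) := by
            apply Finset.sum_le_sum
            intro a _
            exact abs_le.mpr ⟨by nlinarith [hpa_nonneg a, hq_nonneg ω a],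
              by nlinarith [hpa_nonneg a, hq_nonneg ω a]⟩
        _ = 2 := by rw [Finset.sum_add_distrib, hpa_sum, hq_sum]; norm_num
        _ ≤ ε := hε2
    rw [hempty]
    simp [Real.exp_pos]
    positivity
  -- main case: ε < 2
  set t : ℝ := ε / 2 with ht_def
  have ht0 : 0 < t := by positivity
  have ht1 : t < 1 := by rw [ht_def]; linarith
  -- per subset B, the function f B and variables
  set f : Finset A → A → ℝ := fun B a => (if a ∈ B then (1:ℝ) else 0) - ∑ b ∈ B, pa b
    with hf_def
  have hpB_nonneg : ∀ B : Finset A, 0 ≤ ∑ b ∈ B, pa b := fun B =>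
    Finset.sum_nonneg fun b _ => hpa_nonneg b
  have hpB_le_one : ∀ B : Finset A, ∑ b ∈ B, pa b ≤ 1 := by
    intro B
    rw [← hpa_sum]
    exact Finset.sum_le_sum_of_subset_of_nonneg (Finset.subset_univ B)
      (fun a _ _ => hpa_nonneg a)
  have hf_bd : ∀ B (a : A), |f B a| ≤ 1 := by
    intro B a
    rw [hf_def, abs_le]
    constructor <;> [skip; skip] <;>
      · by_cases h : a ∈ B <;> simp [h] <;>
          first
          | linarith [hpB_le_one B, hpB_nonneg B]
          | linarith [hpB_le_one B, hpB_nonneg B]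
  have hf_meas : ∀ B : Finset A, Measurable (f B) := fun B => measurable_of_countable _
  -- sums over B of an ite
  have hsplit : ∀ (B : Finset A) (g : A → ℝ),
      ∑ a : A, pa a * g a = ∑ a ∈ B, pa a * g a + ∑ a ∈ Finset.univ \ B, pa a * g a := by
    intro B g
    rw [← Finset.sum_sdiff (Finset.subset_univ B)]
    ring
  have hpBc : ∀ B : Finset A, ∑ a ∈ Finset.univ \ B, pa a = 1 - ∑ b ∈ B, pa b := by
    intro B
    have := Finset.sum_sdiff (f := pa) (Finset.subset_univ B)
    rw [hpa_sum] at this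
    linarith
  -- mean zero
  have hmean : ∀ B : Finset A, ∑ a : A, pa a * f B a = 0 := by
    intro B
    rw [hsplit B (f B)]
    have h1 : ∑ a ∈ B, pa a * f B a = (∑ b ∈ B, pa b) * (1 - ∑ b ∈ B, pa b) := by
      rw [Finset.sum_mul]
      apply Finset.sum_congr rfl
      intro a ha
      rw [hf_def]; simp [ha]
    have h2 : ∑ a ∈ Finset.univ \ B, pa a * f B a
        = (1 - ∑ b ∈ B, pa b) * (- ∑ b ∈ B, pa b) := by
      rw [← hpBc B, Finset.sum_mul]
      apply Finset.sum_congr rfl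
      intro a ha
      rw [Finset.mem_sdiff] at ha
      rw [hf_def]; simp [ha.2]
    rw [h1, h2]; ring
  -- second moment
  have hvar : ∀ B : Finset A, ∑ a : A, pa a * (f B a) ^ 2 ≤ 1 / 4 := by
    intro B
    set pB := ∑ b ∈ B, pa b with hpB
    rw [hsplit B (fun a => (f B a) ^ 2)]
    have h1 : ∑ a ∈ B, pa a * (f B a) ^ 2 = pB * (1 - pB) ^ 2 := by
      rw [Finset.sum_mul]
      apply Finset.sum_congr rfl
      intro a ha
      rw [hf_def]; simp [ha, hpB]
    have h2 : ∑ a ∈ Finset.univ \ B, pa a * (f B a) ^ 2 = (1 - pB) * pB ^ 2 := by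
      rw [← hpBc B, Finset.sum_mul]
      apply Finset.sum_congr rfl
      intro a ha
      rw [Finset.mem_sdiff] at ha
      rw [hf_def]; simp [ha.2, hpB]
    rw [h1, h2]
    nlinarith [hpB_nonneg B, hpB_le_one B, sq_nonneg (1 - 2 * pB)]
  -- mgf of a single variable
  have hmgf_one : ∀ (B : Finset A) (j : Fin m),
      mgf (fun ω => f B (Y j ω)) P t ≤ Real.exp (t ^ 2 / 4) := by
    intro B j
    have hmap : mgf (fun ω => f B (Y j ω)) P t = ∫ a, Real.exp (t * f B a) ∂μ := by
      rw [mgf, ← hYdist j, integral_map (hYmeas j).aemeasurable]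
      exact (((hf_meas B).const_mul t).exp).aestronglyMeasurable
    rw [hmap, integral_fintype Integrable.of_finite]
    have hptwise : ∀ a : A, Real.exp (t * f B a) ≤ 1 + t * f B a + (t * f B a) ^ 2 := by
      intro a
      apply exp_le_one_add_add_sq
      rw [abs_mul, abs_of_nonneg ht0.le]
      calc t * |f B a| ≤ 1 * 1 := by
            apply mul_le_mul ht1.le (hf_bd B a) (abs_nonneg _) zero_le_one
        _ = 1 := one_mul 1
    calc ∑ a : A, (μ {a}).toReal • Real.exp (t * f B a)
        ≤ ∑ a : A, pa a * (1 + t * f B a + (t * f B a) ^ 2) := by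
          apply Finset.sum_le_sum
          intro a _
          rw [smul_eq_mul]
          exact mul_le_mul_of_nonneg_left (hptwise a) (hpa_nonneg a)
      _ = ∑ a : A, (pa a + t * (pa a * f B a) + t ^ 2 * (pa a * (f B a) ^ 2)) := by
          apply Finset.sum_congr rfl
          intro a _
          ring
      _ = 1 + t * (∑ a : A, pa a * f B a) + t ^ 2 * (∑ a : A, pa a * (f B a) ^ 2) := by
          rw [Finset.sum_add_distrib, Finset.sum_add_distrib, ← Finset.mul_sum,
            ← Finset.mul_sum, hpa_sum]
      _ ≤ 1 + t ^ 2 / 4 := by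
          rw [hmean B, mul_zero, add_zero]
          have := hvar B
          nlinarith [sq_nonneg t]
      _ ≤ Real.exp (t ^ 2 / 4) := by
          have := Real.add_one_le_exp (t ^ 2 / 4)
          linarith
  -- per-subset Chernoff bound
  have hcher : ∀ B : Finset A,
      (P {ω | (m:ℝ) * t ≤ ∑ j : Fin m, f B (Y j ω)}).toReal
        ≤ Real.exp (-(3/4) * m * t ^ 2) := by
    intro B
    set X : Fin m → Ω → ℝ := fun j ω => f B (Y j ω) with hX_def
    have hX_meas : ∀ j, Measurable (X j) := fun j => (hf_meas B).comp (hYmeas j)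
    have hX_indep : iIndepFun X P :=
      hYindep.comp (fun _ => f B) (fun _ => hf_meas B)
    have hX_int : ∀ j ∈ Finset.univ, Integrable (fun ω => Real.exp (t * X j ω)) P := by
      intro j _
      apply Integrable.mono' (integrable_const (Real.exp t))
        (((hX_meas j).const_mul t).exp).aestronglyMeasurable
      filter_upwards with ω
      rw [Real.norm_eq_abs, abs_of_nonneg (Real.exp_pos _).le, Real.exp_le_exp]
      calc t * X j ω ≤ t * 1 := by
            apply mul_le_mul_of_nonneg_left _ ht0.le
            exact le_trans (le_abs_self _) (hf_bd B _)
        _ = t := mul_one t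
    have hS_eq : (fun ω => ∑ j : Fin m, f B (Y j ω)) = ∑ j : Fin m, X j := by
      funext ω; simp [hX_def]
    have h_int_sum : Integrable (fun ω => Real.exp (t * (∑ j : Fin m, X j) ω)) P :=
      hX_indep.integrable_exp_mul_sum hX_meas hX_int
    have hcher0 := measure_ge_le_exp_mul_mgf (μ := P) (X := ∑ j : Fin m, X j)
      ((m:ℝ) * t) ht0.le h_int_sum
    have hmgf_sum : mgf (∑ j : Fin m, X j) P t = ∏ j : Fin m, mgf (X j) P t :=
      hX_indep.mgf_sum hX_meas Finset.univ
    have hprod : ∏ j : Fin m, mgf (X j) P t ≤ Real.exp ((m:ℝ) * (t ^ 2 / 4)) := by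
      calc ∏ j : Fin m, mgf (X j) P t ≤ ∏ _j : Fin m, Real.exp (t ^ 2 / 4) := by
            apply Finset.prod_le_prod
            · intro j _; exact mgf_nonneg
            · intro j _; exact hmgf_one B j
        _ = Real.exp (t ^ 2 / 4) ^ m := by simp
        _ = Real.exp ((m:ℝ) * (t ^ 2 / 4)) := by
            rw [← Real.exp_nat_mul]
    calc (P {ω | (m:ℝ) * t ≤ ∑ j : Fin m, f B (Y j ω)}).toReal
        = (P {ω | (m:ℝ) * t ≤ (∑ j : Fin m, X j) ω}).toReal := by
          congr 1
          apply congrArg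
          ext ω
          simp [hX_def]
      _ ≤ Real.exp (-t * ((m:ℝ) * t)) * mgf (∑ j : Fin m, X j) P t := hcher0
      _ ≤ Real.exp (-t * ((m:ℝ) * t)) * Real.exp ((m:ℝ) * (t ^ 2 / 4)) := by
          apply mul_le_mul_of_nonneg_left _ (Real.exp_pos _).le
          rw [hmgf_sum]; exact hprod
      _ = Real.exp (-(3/4) * m * t ^ 2) := by
          rw [← Real.exp_add]; ring_nf
  -- inclusion of the main event in the union
  have hincl : {ω | ε < ∑ a : A, |pa a - q ω a|} ⊆
      ⋃ B ∈ Finset.univ.powerset (α := A), {ω | (m:ℝ) * t ≤ ∑ j : Fin m, f B (Y j ω)} := by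
    intro ω hω
    simp only [Set.mem_setOf_eq] at hω
    set B : Finset A := Finset.univ.filter (fun a => pa a < q ω a) with hB_def
    have hcount : ∀ C : Finset A,
        ∑ j : Fin m, (if Y j ω ∈ C then (1:ℝ) else 0)
          = ∑ a ∈ C, ((Finset.univ.filter (fun j : Fin m => Y j ω = a)).card : ℝ) := by
      intro C
      push_cast [Finset.card_filter]
      rw [Finset.sum_comm]
      apply Finset.sum_congr rfl
      intro j _
      simp [Finset.sum_ite_eq]
    have hqB : ∑ a ∈ B, q ω a = (∑ j : Fin m, (if Y j ω ∈ B then (1:ℝ) else 0)) / m := by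
      rw [hcount B, Finset.sum_div]
    -- total difference is zero
    have htot : ∑ a : A, (q ω a - pa a) = 0 := by
      rw [Finset.sum_sub_distrib, hq_sum ω, hpa_sum, sub_self]
    -- the TV identity
    have habs : ∑ a : A, |pa a - q ω a| = 2 * ∑ a ∈ B, (q ω a - pa a) := by
      have hsplit2 : ∑ a : A, |pa a - q ω a|
          = ∑ a ∈ Finset.univ \ B, (pa a - q ω a) + ∑ a ∈ B, (q ω a - pa a) := by
        rw [← Finset.sum_sdiff (Finset.subset_univ B)]
        congr 1
        · apply Finset.sum_congr rfl
          intro a ha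
          rw [Finset.mem_sdiff, hB_def, Finset.mem_filter] at ha
          have : ¬ pa a < q ω a := fun h => ha.2 ⟨Finset.mem_univ a, h⟩
          rw [abs_of_nonneg]; linarith
        · apply Finset.sum_congr rfl
          intro a ha
          rw [hB_def, Finset.mem_filter] at ha
          rw [abs_of_nonpos] <;> linarith [ha.2]
      have hzero : ∑ a ∈ Finset.univ \ B, (pa a - q ω a)
          = ∑ a ∈ B, (q ω a - pa a) := by
        have := Finset.sum_sdiff (f := fun a => q ω a - pa a) (Finset.subset_univ B)
        rw [htot] at this
        have h2 : ∑ a ∈ Finset.univ \ B, (pa a - q ω a)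
            = - ∑ a ∈ Finset.univ \ B, (q ω a - pa a) := by
          rw [← Finset.sum_neg_distrib]
          apply Finset.sum_congr rfl; intro a _; ring
        linarith
      rw [hsplit2, hzero]; ring
    have hB_gt : t < ∑ a ∈ B, (q ω a - pa a) := by
      rw [habs] at hω
      rw [ht_def]; linarith
    refine Set.mem_iUnion₂.mpr ⟨B, Finset.mem_powerset.mpr (Finset.subset_univ B), ?_⟩
    simp only [Set.mem_setOf_eq]
    have hSB : ∑ j : Fin m, f B (Y j ω)
        = (m:ℝ) * ∑ a ∈ B, (q ω a - pa a) := by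
      have lhs : ∑ j : Fin m, f B (Y j ω)
          = (∑ j : Fin m, (if Y j ω ∈ B then (1:ℝ) else 0)) - (m:ℝ) * ∑ b ∈ B, pa b := by
        simp only [hf_def, Finset.sum_sub_distrib, Finset.sum_const, Finset.card_univ,
          Fintype.card_fin, nsmul_eq_mul]
      have rhs : (m:ℝ) * ∑ a ∈ B, (q ω a - pa a)
          = (∑ j : Fin m, (if Y j ω ∈ B then (1:ℝ) else 0)) - (m:ℝ) * ∑ b ∈ B, pa b := by
        rw [Finset.sum_sub_distrib, mul_sub, hqB, mul_div_cancel₀ _ hm'.ne']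
      rw [lhs, rhs]
    rw [hSB]
    have : (m:ℝ) * t ≤ (m:ℝ) * ∑ a ∈ B, (q ω a - pa a) := by
      apply mul_le_mul_of_nonneg_left hB_gt.le hm'.le
    linarith
  -- combine: union bound + counting + numerics
  calc (P {ω | ε < ∑ a : A, |pa a - q ω a|}).toReal
      ≤ (∑ B ∈ Finset.univ.powerset (α := A),
          P {ω | (m:ℝ) * t ≤ ∑ j : Fin m, f B (Y j ω)}).toReal := by
        apply ENNReal.toReal_mono
        · exact (ENNReal.sum_lt_top.mpr fun B _ => measure_lt_top P _).ne
        · exact le_trans (measure_mono hincl) (measure_biUnion_finset_le _ _)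
    _ = ∑ B ∈ Finset.univ.powerset (α := A),
          (P {ω | (m:ℝ) * t ≤ ∑ j : Fin m, f B (Y j ω)}).toReal := by
        exact ENNReal.toReal_sum fun B _ => (measure_lt_top P _).ne
    _ ≤ ∑ _B ∈ Finset.univ.powerset (α := A), Real.exp (-(3/4) * m * t ^ 2) := by
        apply Finset.sum_le_sum
        intro B _
        exact hcher B
    _ = 2 ^ (s + 1) * Real.exp (-(3/4) * m * t ^ 2) := by
        rw [Finset.sum_const, Finset.card_powerset, Finset.card_univ, hcard, nsmul_eq_mul]
        push_cast; ring
    _ ≤ 3 * Real.exp (-(m : ℝ) * ε ^ 2 / 25) := by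
        have hts : -(3/4) * (m:ℝ) * t ^ 2 = -(3/16) * m * ε ^ 2 := by
          rw [ht_def]; ring
        rw [hts]
        have h2exp : (2:ℝ) ≤ Real.exp (59 / 20) := by
          have := Real.add_one_le_exp (59 / 20 : ℝ)
          linarith
        have hpow : (2:ℝ) ^ (s + 1) ≤ Real.exp ((59 / 20) * (s + 1)) := by
          calc (2:ℝ) ^ (s + 1) ≤ Real.exp (59 / 20) ^ (s + 1) := by
                apply pow_le_pow_left₀ (by norm_num) h2exp
            _ = Real.exp ((59 / 20) * (s + 1)) := by
                rw [← Real.exp_nat_mul]; norm_num [mul_comm]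
        have hkey : (59 / 20 : ℝ) * (s + 1) ≤ (59 / 400) * (m * ε ^ 2) := by
          nlinarith [hmε]
        calc (2:ℝ) ^ (s + 1) * Real.exp (-(3/16) * m * ε ^ 2)
            ≤ Real.exp ((59 / 400) * (m * ε ^ 2)) * Real.exp (-(3/16) * m * ε ^ 2) := by
              apply mul_le_mul_of_nonneg_right _ (Real.exp_pos _).le
              exact le_trans hpow (Real.exp_le_exp.mpr hkey)
          _ = Real.exp ((59 / 400) * (m * ε ^ 2) + (-(3/16) * m * ε ^ 2)) := by
              rw [← Real.exp_add]
          _ = Real.exp (-(m : ℝ) * ε ^ 2 / 25) := by ring_nf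
          _ ≤ 3 * Real.exp (-(m : ℝ) * ε ^ 2 / 25) := by
              nlinarith [Real.exp_pos (-(m : ℝ) * ε ^ 2 / 25)]
end

section
/- (Cycle Lemma, existence and uniqueness of the good rotation.) Let n ≥ 1 and let x_1, ..., x_{2n+1} be a sequence with each x_i ∈ {−1, +1} and x_1 + ... + x_{2n+1} = −1. Then there exists exactly one r ∈ {0, 1, ..., 2n} such that the cyclically rotated sequence y_i = x_{((r+i−1) mod (2n+1)) + 1} satisfies y_1 + ... + y_j ≥ 0 for all 1 ≤ j ≤ 2n; for this r one also has y_1 + ... + y_{2n} = 0 and y_{2n+1} = −1, so the first 2n terms of y form a Dyck path. -/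
open Fin.NatCast in
private def Fp {N : ℕ} [NeZero N] (x : Fin N → ℤ) : ℕ → ℤ :=
  fun j => ∑ i ∈ Finset.range j, x (i : Fin N)

open Fin.NatCast in
private lemma Fp_succ {N : ℕ} [NeZero N] (x : Fin N → ℤ) (j : ℕ) :
    Fp x (j + 1) = Fp x j + x (j : Fin N) := Finset.sum_range_succ _ _

open Fin.NatCast in
private lemma Fp_period {N : ℕ} [NeZero N] (x : Fin N → ℤ) (j : ℕ) :
    Fp x (j + N) = Fp x j + Fp x N := by
  induction j with
  | zero => simp [Fp]
  | succ j ih =>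
    have h1 : ((j + N : ℕ) : Fin N) = (j : Fin N) := by
      push_cast
      simp
    have h2 : j + 1 + N = (j + N) + 1 := by omega
    rw [h2, Fp_succ, ih, h1, Fp_succ]
    ring

open Fin.NatCast in
private lemma Fp_shift {N : ℕ} [NeZero N] (x : Fin N → ℤ) (r : Fin N) (j : ℕ) :
    ∑ i ∈ Finset.range j, x (r + (i : Fin N)) = Fp x ((r : ℕ) + j) - Fp x (r : ℕ) := by
  induction j with
  | zero => simp
  | succ j ih =>
    rw [Finset.sum_range_succ, ih, ← Nat.add_assoc, Fp_succ]
    have h1 : (((r : ℕ) + j : ℕ) : Fin N) = r + (j : Fin N) := by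
      push_cast
      simp [Fin.cast_val_eq_self]
    rw [h1]; ring

open Fin.NatCast in
/-- The Cycle Lemma (existence and uniqueness of the good rotation): if
`x₁,…,x_{2n+1} ∈ {-1,+1}` sum to `-1`, then there is exactly one cyclic rotation
`y_i = x_{(r+i) mod (2n+1)}` whose first `2n` partial sums are all nonnegative; for this
rotation one moreover has `y₁ + ⋯ + y_{2n} = 0` and `y_{2n+1} = -1`, i.e. the first `2n`
terms form a Dyck path. -/
theorem cycle_lemma (n : ℕ) (hn : 1 ≤ n) (x : Fin (2 * n + 1) → ℤ)
    (hx : ∀ i, x i = 1 ∨ x i = -1) (hsum : ∑ i, x i = -1) :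
    (∃! r : Fin (2 * n + 1), ∀ j ≤ 2 * n,
        0 ≤ ∑ i ∈ Finset.range j, x (r + (i : Fin (2 * n + 1)))) ∧
      ∀ r : Fin (2 * n + 1),
        (∀ j ≤ 2 * n, 0 ≤ ∑ i ∈ Finset.range j, x (r + (i : Fin (2 * n + 1)))) →
          (∑ i ∈ Finset.range (2 * n), x (r + (i : Fin (2 * n + 1)))) = 0 ∧
            x (r + ((2 * n : ℕ) : Fin (2 * n + 1))) = -1 := by
  classical
  have hFN : Fp x (2 * n + 1) = -1 := by
    rw [← hsum, Fp]
    rw [← Fin.sum_univ_eq_sum_range (fun i => x (i : Fin (2 * n + 1))) (2 * n + 1)]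
    simp [Fin.cast_val_eq_self]
  have goodIff : ∀ r : Fin (2 * n + 1),
      (∀ j ≤ 2 * n, 0 ≤ ∑ i ∈ Finset.range j, x (r + (i : Fin (2 * n + 1)))) ↔
      (∀ j ≤ 2 * n, Fp x (r : ℕ) ≤ Fp x ((r : ℕ) + j)) := by
    intro r
    simp only [Fp_shift, sub_nonneg]
  obtain ⟨k0, hk0, hk0min⟩ := Finset.exists_min_image (Finset.range (2 * n + 1)) (Fp x)
    (by simp)
  have hP : ∃ k, k < 2 * n + 1 ∧ ∀ m < 2 * n + 1, Fp x k ≤ Fp x m :=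
    ⟨k0, Finset.mem_range.mp hk0, fun m hm => hk0min m (Finset.mem_range.mpr hm)⟩
  set r := Nat.find hP with hr
  obtain ⟨hrN, hrmin⟩ := Nat.find_spec hP
  have hfirst : ∀ k < r, Fp x r < Fp x k := by
    intro k hk
    have hkN : k < 2 * n + 1 := lt_trans hk hrN
    have h := Nat.find_min hP hk
    push_neg at h
    obtain ⟨m, hm, hmlt⟩ := h hkN
    exact lt_of_le_of_lt (hrmin m hm) hmlt
  have hgoodr : ∀ j ≤ 2 * n, Fp x r ≤ Fp x (r + j) := by
    intro j hj
    by_cases h : r + j < 2 * n + 1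
    · exact hrmin _ h
    · have hk : r + j = (r + j - (2 * n + 1)) + (2 * n + 1) := by omega
      rw [hk, Fp_period, hFN]
      have hlt : r + j - (2 * n + 1) < r := by omega
      have := hfirst _ hlt
      linarith
  have huniq : ∀ a b : ℕ, a < 2 * n + 1 → b < 2 * n + 1 → a < b →
      (∀ j ≤ 2 * n, Fp x a ≤ Fp x (a + j)) → (∀ j ≤ 2 * n, Fp x b ≤ Fp x (b + j)) → False := by
    intro a b haN hbN hab hga hgb
    have h1 : Fp x a ≤ Fp x b := by
      have := hga (b - a) (by omega)
      rwa [show a + (b - a) = b by omega] at this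
    have h2 : Fp x b ≤ Fp x (a + (2 * n + 1)) := by
      have := hgb (a + (2 * n + 1) - b) (by omega)
      rwa [show b + (a + (2 * n + 1) - b) = a + (2 * n + 1) by omega] at this
    rw [Fp_period, hFN] at h2
    linarith
  have hfinal : ∀ s : Fin (2 * n + 1), (∀ j ≤ 2 * n, Fp x (s : ℕ) ≤ Fp x ((s : ℕ) + j)) →
      (∑ i ∈ Finset.range (2 * n), x (s + (i : Fin (2 * n + 1)))) = 0 ∧
        x (s + ((2 * n : ℕ) : Fin (2 * n + 1))) = -1 := by
    intro s hs
    have h1 : Fp x ((s : ℕ) + (2 * n + 1)) = Fp x (s : ℕ) - 1 := by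
      rw [Fp_period, hFN]; ring
    have hcast : (((s : ℕ) + 2 * n : ℕ) : Fin (2 * n + 1)) = s + ((2 * n : ℕ) : Fin (2 * n + 1)) := by
      push_cast
      simp [Fin.cast_val_eq_self]
    have h2 : Fp x ((s : ℕ) + (2 * n + 1)) =
        Fp x ((s : ℕ) + 2 * n) + x (s + ((2 * n : ℕ) : Fin (2 * n + 1))) := by
      rw [show (s : ℕ) + (2 * n + 1) = ((s : ℕ) + 2 * n) + 1 by omega, Fp_succ, hcast]
    have h3 := hs (2 * n) le_rfl
    have h4 := hx (s + ((2 * n : ℕ) : Fin (2 * n + 1)))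
    have hsum0 : Fp x ((s : ℕ) + 2 * n) = Fp x (s : ℕ) := by
      rcases h4 with h | h <;> rw [h] at h2 <;> linarith
    refine ⟨?_, ?_⟩
    · rw [Fp_shift, hsum0]; ring
    · rcases h4 with h | h
      · exfalso; rw [h] at h2; linarith
      · exact h
  refine ⟨⟨⟨r, hrN⟩, ?_, ?_⟩, ?_⟩
  · exact (goodIff ⟨r, hrN⟩).mpr hgoodr
  · intro y hy
    replace hy := (goodIff y).mp hy
    by_contra hne
    have hyv : (y : ℕ) ≠ r := fun h => hne (Fin.ext h)
    rcases lt_or_gt_of_ne hyv with h | h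
    · exact huniq _ _ y.isLt hrN h hy hgoodr
    · exact huniq _ _ hrN y.isLt h hgoodr hy
  · intro s hsgood
    exact hfinal s ((goodIff s).mp hsgood)
end

section
/- (Cycle Lemma, fiber count.) Let n ≥ 1 and let w_1, ..., w_{2n} be a Dyck path of length 2n. Then there are exactly 2n+1 sequences x_1, ..., x_{2n+1} with each x_i ∈ {−1, +1} and sum −1 whose unique cyclic rotation with all partial sums of the first 2n terms nonnegative equals (w_1, ..., w_{2n}, −1); equivalently, the 2n+1 cyclic rotations of the sequence (w_1, ..., w_{2n}, −1) are pairwise distinct and are exactly these sequences. -/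
/-- The Cycle Lemma, fiber count: if `w₁,…,w_{2n}` is a Dyck path of length `2n` and
`z = (w₁,…,w_{2n},-1)`, then there are exactly `2n+1` sequences `x` of `2n+1` entries from
`{-1,+1}` summing to `-1` whose (unique) cyclic rotation with all partial sums of the first
`2n` terms nonnegative equals `z`; equivalently, the `2n+1` cyclic rotations of `z` are
pairwise distinct and are exactly these sequences. -/
theorem cycle_lemma_fiber_count (n : ℕ) (hn : 1 ≤ n) (w : ℕ → ℤ)
    (hw1 : ∀ i < 2 * n, w i = 1 ∨ w i = -1)
    (hw2 : ∀ j ≤ 2 * n, 0 ≤ ∑ i ∈ Finset.range j, w i)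
    (hw3 : ∑ i ∈ Finset.range (2 * n), w i = 0)
    (z : Fin (2 * n + 1) → ℤ)
    (hz : ∀ i : Fin (2 * n + 1), z i = if (i : ℕ) < 2 * n then w i else -1) :
    ({x : Fin (2 * n + 1) → ℤ |
        (∀ i, x i = 1 ∨ x i = -1) ∧ (∑ i, x i = -1) ∧
          ∃ r : Fin (2 * n + 1),
            (∀ j ≤ 2 * n, 0 ≤ ∑ i ∈ Finset.range j, x (r + (Fin.ofNat (2 * n + 1) i : Fin (2 * n + 1)))) ∧
              ∀ i, x (r + i) = z i}).ncard = 2 * n + 1 ∧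
      Function.Injective (fun r : Fin (2 * n + 1) => fun i : Fin (2 * n + 1) => z (r + i)) ∧
      {x : Fin (2 * n + 1) → ℤ |
        (∀ i, x i = 1 ∨ x i = -1) ∧ (∑ i, x i = -1) ∧
          ∃ r : Fin (2 * n + 1),
            (∀ j ≤ 2 * n, 0 ≤ ∑ i ∈ Finset.range j, x (r + (Fin.ofNat (2 * n + 1) i : Fin (2 * n + 1)))) ∧
              ∀ i, x (r + i) = z i} =
        Set.range (fun r : Fin (2 * n + 1) => fun i : Fin (2 * n + 1) => z (r + i)) := by
  set f : ℕ → ℤ := fun k => if k < 2 * n then w k else -1 with hf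
  have hzval : ∀ i : Fin (2 * n + 1), z i = f i.val := fun i => hz i
  have hfval : ∀ k, f k = 1 ∨ f k = -1 := by
    intro k
    by_cases h : k < 2 * n
    · simpa [hf, h] using hw1 k h
    · simp [hf, h]
  have hfsum : ∀ j ≤ 2 * n, ∑ i ∈ Finset.range j, f i = ∑ i ∈ Finset.range j, w i := by
    intro j hj
    refine Finset.sum_congr rfl fun i hi => ?_
    have : i < 2 * n := lt_of_lt_of_le (Finset.mem_range.mp hi) hj
    simp [hf, this]
  have hfm : ∑ i ∈ Finset.range (2 * n + 1), f i = -1 := by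
    rw [Finset.sum_range_succ, hfsum _ le_rfl, hw3]
    simp [hf]
  -- partial sums of z along natural casts
  have hzcast : ∀ j ≤ 2 * n,
      ∑ i ∈ Finset.range j, z (Fin.ofNat (2 * n + 1) i : Fin (2 * n + 1)) = ∑ i ∈ Finset.range j, w i := by
    intro j hj
    refine Finset.sum_congr rfl fun i hi => ?_
    have hi' : i < 2 * n := lt_of_lt_of_le (Finset.mem_range.mp hi) hj
    rw [hzval]
    rw [Fin.val_ofNat, Nat.mod_eq_of_lt (by omega)]
    simp [hf, hi']
  have hsumz : ∑ i : Fin (2 * n + 1), z i = -1 := by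
    have h1 : ∑ i : Fin (2 * n + 1), z i = ∑ i : Fin (2 * n + 1), f i :=
      Finset.sum_congr rfl fun i _ => hzval i
    rw [h1, Fin.sum_univ_eq_sum_range f (2 * n + 1), hfm]
  set g : Fin (2 * n + 1) → Fin (2 * n + 1) → ℤ :=
    fun r => fun i => z (r + i) with hg
  -- injectivity
  have hinj : Function.Injective g := by
    intro r s hrs
    by_contra hne
    have hper : ∀ j : Fin (2 * n + 1), z j = z ((s - r) + j) := by
      intro j
      have h1 := congrFun hrs (-r + j)
      simp only [hg] at h1
      rw [add_neg_cancel_left] at h1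
      rw [h1]
      congr 1
      abel
    set t : Fin (2 * n + 1) := s - r with htdef
    have ht : t ≠ 0 := sub_ne_zero.mpr (Ne.symm hne)
    have hta1 : 1 ≤ t.val := by
      rcases Nat.eq_zero_or_pos t.val with h | h
      · exact absurd (Fin.ext h) ht
      · exact h
    have hta2 : t.val ≤ 2 * n := by have := t.isLt; omega
    set a := t.val with ha
    set j := 2 * n + 1 - a with hjdef
    have hj2 : j ≤ 2 * n := by omega
    have hA1 : ∑ i ∈ Finset.range j, z (t + (Fin.ofNat (2 * n + 1) i : Fin (2 * n + 1)))
        = ∑ i ∈ Finset.range j, w i := by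
      rw [← hzcast j hj2]
      exact Finset.sum_congr rfl fun i _ => (hper _).symm
    have hA2 : ∑ i ∈ Finset.range j, z (t + (Fin.ofNat (2 * n + 1) i : Fin (2 * n + 1)))
        = ∑ i ∈ Finset.range j, f (a + i) := by
      refine Finset.sum_congr rfl fun i hi => ?_
      have hi' : i < j := Finset.mem_range.mp hi
      rw [hzval]
      congr 1
      rw [Fin.val_add, Fin.val_ofNat, Nat.mod_eq_of_lt (show i < 2 * n + 1 by omega), Nat.mod_eq_of_lt (by omega)]
    have hsplit : ∑ i ∈ Finset.range (a + j), f i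
        = (∑ i ∈ Finset.range a, f i) + ∑ i ∈ Finset.range j, f (a + i) :=
      Finset.sum_range_add f a j
    have haj : a + j = 2 * n + 1 := by omega
    rw [haj, hfm] at hsplit
    have h0a : 0 ≤ ∑ i ∈ Finset.range a, f i := by
      rw [hfsum a hta2]; exact hw2 a hta2
    have h0j : 0 ≤ ∑ i ∈ Finset.range j, w i := hw2 j hj2
    rw [hA1] at hA2
    omega
  -- every rotation is in the set
  have hmem : ∀ r : Fin (2 * n + 1), g r ∈
      {x : Fin (2 * n + 1) → ℤ |
        (∀ i, x i = 1 ∨ x i = -1) ∧ (∑ i, x i = -1) ∧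
          ∃ r : Fin (2 * n + 1),
            (∀ j ≤ 2 * n, 0 ≤ ∑ i ∈ Finset.range j, x (r + (Fin.ofNat (2 * n + 1) i : Fin (2 * n + 1)))) ∧
              ∀ i, x (r + i) = z i} := by
    intro r
    refine ⟨fun i => ?_, ?_, ⟨-r, ?_, ?_⟩⟩
    · show z (r + i) = 1 ∨ z (r + i) = -1
      rw [hzval]; exact hfval _
    · show ∑ i, z (r + i) = -1
      exact (Equiv.sum_comp (Equiv.addLeft r) z).trans hsumz
    · intro j hj
      have : ∑ i ∈ Finset.range j, g r (-r + (Fin.ofNat (2 * n + 1) i : Fin (2 * n + 1)))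
          = ∑ i ∈ Finset.range j, z (Fin.ofNat (2 * n + 1) i : Fin (2 * n + 1)) := by
        refine Finset.sum_congr rfl fun i _ => ?_
        simp only [hg, add_neg_cancel_left]
      rw [this, hzcast j hj]
      exact hw2 j hj
    · intro i
      simp only [hg, add_neg_cancel_left]
  -- the set equals the range
  have hseteq : {x : Fin (2 * n + 1) → ℤ |
        (∀ i, x i = 1 ∨ x i = -1) ∧ (∑ i, x i = -1) ∧
          ∃ r : Fin (2 * n + 1),
            (∀ j ≤ 2 * n, 0 ≤ ∑ i ∈ Finset.range j, x (r + (Fin.ofNat (2 * n + 1) i : Fin (2 * n + 1)))) ∧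
              ∀ i, x (r + i) = z i} = Set.range g := by
    apply Set.Subset.antisymm
    · rintro x ⟨-, -, r, -, h4⟩
      refine ⟨-r, ?_⟩
      funext i
      simp only [hg]
      rw [← h4 (-r + i), add_neg_cancel_left]
    · rintro x ⟨r, rfl⟩
      exact hmem r
  refine ⟨?_, hinj, hseteq⟩
  rw [hseteq, ← Nat.card_coe_set_eq, Nat.card_range_of_injective hinj]
  simp
end
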